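/- arXiv:1504.00210 — 12 statements merged into one kernel-verified Lean document; each statement's English description precedes it below -/
import Mathlib

section
/- Let Md, Me, Mf be the midpoints of the segments AD, BE, CF respectively. Then the three lines D0Md, E0Me, F0Mf all pass through the isotomcomplement Q of P; that is, each of the triples {D0, Md, Q}, {E0, Me, Q}, {F0, Mf, Q} is collinear. -/
open EuclideanGeometry Affine

local notation "Pt" => EuclideanSpace ℝ (Fin 2)

private lemma coll_mk (p q r : Pt) (k : ℝ) (h : r - p = k • (q - p)) :
    Collinear ℝ ({p, q, r} : Set Pt) := by
  have hr : r ∈ line[ℝ, p, q] := by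
    have hmem := smul_vsub_vadd_mem_affineSpan_pair k p q
    have hrr : r = k • (q -ᵥ p) +ᵥ p := by
      simp only [vsub_eq_sub, vadd_eq_add, ← h]; abel
    rwa [← hrr] at hmem
  have h2 := collinear_insert_of_mem_affineSpan_pair hr
  have hset : ({p, q, r} : Set Pt) = {r, p, q} := by
    ext x; simp only [Set.mem_insert_iff, Set.mem_singleton_iff]; tauto
  rwa [hset]

private lemma coll_ext {p q r : Pt} (h : Collinear ℝ ({p, q, r} : Set Pt)) (hpq : p ≠ q) :
    ∃ t : ℝ, r - p = t • (q - p) := by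
  have hr : r ∈ line[ℝ, p, q] :=
    h.mem_affineSpan_of_mem_of_ne (Set.mem_insert _ _) (by simp) (by simp) hpq
  have h2 : (r - p) +ᵥ p ∈ line[ℝ, p, q] := by
    simpa only [vadd_eq_add, sub_add_cancel] using hr
  rw [vadd_left_mem_affineSpan_pair] at h2
  obtain ⟨t, ht⟩ := h2
  exact ⟨t, by rw [← ht]; simp only [vsub_eq_sub]⟩

theorem stmt_0 (A B C G P D E F D0 E0 F0 D3 E3 F3 P' Q Md Me Mf : Pt)
(hABC : AffineIndependent ℝ ![A, B, C])
    (hG : G = (1/3 : ℝ) • (A + B + C))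
    (hPa : ¬ Collinear ℝ {B, C, P})
    (hPb : ¬ Collinear ℝ {C, A, P})
    (hPc : ¬ Collinear ℝ {A, B, P})
    (hD : Collinear ℝ {B, C, D}) (hDcev : Collinear ℝ {A, P, D})
    (hE : Collinear ℝ {C, A, E}) (hEcev : Collinear ℝ {B, P, E})
    (hF : Collinear ℝ {A, B, F}) (hFcev : Collinear ℝ {C, P, F})
    (hD0 : D0 = midpoint ℝ B C) (hE0 : E0 = midpoint ℝ C A) (hF0 : F0 = midpoint ℝ A B)
(hD3 : D3 = Equiv.pointReflection D0 D)
    (hE3 : E3 = Equiv.pointReflection E0 E)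
    (hF3 : F3 = Equiv.pointReflection F0 F)
(hP'a : Collinear ℝ {A, D3, P'})
    (hP'b : Collinear ℝ {B, E3, P'})
    (hP'c : Collinear ℝ {C, F3, P'})
    (hQ : Q = AffineMap.homothety G (-1/2 : ℝ) P')
    (hMd : Md = midpoint ℝ A D) (hMe : Me = midpoint ℝ B E) (hMf : Mf = midpoint ℝ C F) :
    Collinear ℝ {D0, Md, Q} ∧ Collinear ℝ {E0, Me, Q} ∧ Collinear ℝ {F0, Mf, Q} := by
  have hnc : ¬Collinear ℝ ({A, B, C} : Set Pt) := affineIndependent_iff_not_collinear_set.mp hABC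
  have hAB : A ≠ B := by
    intro h; exact hnc (by rw [h, Set.insert_idem]; exact collinear_pair ℝ B C)
  have hBC : B ≠ C := fun h => hnc (coll_mk A B C 1 (by rw [one_smul, h]))
  have hCA : C ≠ A := fun h => hnc (coll_mk A B C 0 (by rw [h]; simp))
  have hAP : A ≠ P := fun h => hPc (coll_mk A B P 0 (by rw [← h]; simp))
  have hBP : B ≠ P := fun h => hPc (coll_mk A B P 1 (by rw [one_smul, ← h]))
  have hCP : C ≠ P := fun h => hPa (coll_mk B C P 1 (by rw [one_smul, ← h]))
  have key : ∀ x y : ℝ, x • (B - A) + y • (C - A) = 0 → x = 0 ∧ y = 0 := by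
    intro x y hxy
    by_contra hcon
    rcases eq_or_ne y 0 with hy | hy
    · rw [hy, zero_smul, add_zero, smul_eq_zero] at hxy
      rcases hxy with hx | hba
      · exact hcon ⟨hx, hy⟩
      · rw [sub_eq_zero] at hba
        exact hAB hba.symm
    · apply hnc
      apply coll_mk A B C (-x / y)
      have h2 : y • (C - A) = (-x) • (B - A) := by
        linear_combination (norm := module) hxy
      calc C - A = (y⁻¹ * y) • (C - A) := by rw [inv_mul_cancel₀ hy, one_smul]
        _ = y⁻¹ • ((-x) • (B - A)) := by rw [mul_smul, h2]
        _ = (-x / y) • (B - A) := by rw [smul_smul]; congr 1; ring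
  have hli : LinearIndependent ℝ ![B - A, C - A] := by
    rw [linearIndependent_fin2]
    simp only [Matrix.cons_val_one, Matrix.head_cons, Matrix.cons_val_zero]
    constructor
    · intro h; rw [sub_eq_zero] at h; exact hCA h
    · intro a ha
      have := key 1 (-a) (by linear_combination (norm := module) (-(1:ℝ)) • ha)
      exact one_ne_zero this.1
  obtain ⟨bas, hbas⟩ : ∃ bas : Module.Basis (Fin 2) ℝ Pt, ⇑bas = ![B - A, C - A] :=
    ⟨basisOfLinearIndependentOfCardEqFinrank hli (by simp),
      coe_basisOfLinearIndependentOfCardEqFinrank _ _⟩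
  have span : ∀ X : Pt, ∃ b c : ℝ, X - A = b • (B - A) + c • (C - A) := by
    intro X
    refine ⟨bas.repr (X - A) 0, bas.repr (X - A) 1, ?_⟩
    have hs := bas.sum_repr (X - A)
    rw [Fin.sum_univ_two] at hs
    have h0 : bas 0 = B - A := by rw [show bas 0 = (⇑bas) 0 from rfl, hbas]; rfl
    have h1 : bas 1 = C - A := by rw [show bas 1 = (⇑bas) 1 from rfl, hbas]; rfl
    rw [h0, h1] at hs
    exact hs.symm
  obtain ⟨b, c, hP⟩ := span P
  -- D
  obtain ⟨t1, hDt⟩ := coll_ext hD hBC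
  obtain ⟨s1, hDs⟩ := coll_ext hDcev hAP
  have hDkey : (s1 * b + t1 - 1) • (B - A) + (s1 * c - t1) • (C - A) = 0 := by
    linear_combination (norm := module) (-1 : ℝ) • hDs + hDt - s1 • hP
  obtain ⟨hd1, hd2⟩ := key _ _ hDkey
  have hDA : D - A = (s1 * b) • (B - A) + (s1 * c) • (C - A) := by
    linear_combination (norm := module) hDs + s1 • hP
  -- E
  obtain ⟨t2, hEt⟩ := coll_ext hE hCA
  obtain ⟨s2, hEs⟩ := coll_ext hEcev hBP
  have hEkey : (s2 * (b - 1) + 1) • (B - A) + (s2 * c + t2 - 1) • (C - A) = 0 := by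
    linear_combination (norm := module) (-1 : ℝ) • hEs + hEt - s2 • hP
  obtain ⟨he1, he2⟩ := key _ _ hEkey
  have hEA : E - A = (s2 * c) • (C - A) := by
    have ht2 : t2 = 1 - s2 * c := by linarith
    rw [ht2] at hEt
    linear_combination (norm := module) hEt
  -- F
  obtain ⟨t3, hFt⟩ := coll_ext hF hAB
  obtain ⟨s3, hFs⟩ := coll_ext hFcev hCP
  have hFkey : (s3 * b - t3) • (B - A) + (s3 * c - s3 + 1) • (C - A) = 0 := by
    linear_combination (norm := module) hFt - hFs - s3 • hP
  obtain ⟨hf1, hf2⟩ := key _ _ hFkey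
  have hFA : F - A = (s3 * b) • (B - A) := by
    have ht3 : t3 = s3 * b := by linarith
    rw [ht3] at hFt; exact hFt
  have hmid : ∀ x y : Pt, midpoint ℝ x y = (1/2 : ℝ) • (x + y) := by
    intro x y; rw [midpoint_eq_smul_add]; norm_num
  -- D3 and P'
  have hD3A : D3 - A = (1 - s1 * b) • (B - A) + (1 - s1 * c) • (C - A) := by
    rw [hD3, Equiv.pointReflection_apply, hD0, hmid]
    simp only [vadd_eq_add, vsub_eq_sub]
    linear_combination (norm := module) (-1 : ℝ) • hDA
  have hAD3 : A ≠ D3 := by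
    intro h
    have h0 : (1 - s1 * b) • (B - A) + (1 - s1 * c) • (C - A) = 0 := by
      rw [← hD3A, ← h, sub_self]
    obtain ⟨hx, hy⟩ := key _ _ h0
    linarith
  obtain ⟨u, hP'a'⟩ := coll_ext hP'a hAD3
  have hP'A : P' - A = (u * (1 - s1 * b)) • (B - A) + (u * (1 - s1 * c)) • (C - A) := by
    rw [hP'a', hD3A]; module
  -- E3
  have hE3A : E3 - A = (1 - s2 * c) • (C - A) := by
    rw [hE3, Equiv.pointReflection_apply, hE0, hmid]
    simp only [vadd_eq_add, vsub_eq_sub]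
    linear_combination (norm := module) (-1 : ℝ) • hEA
  have hBE3 : B ≠ E3 := by
    intro h
    have hv : E3 - B = 0 := by rw [← h, sub_self]
    have h0 : (1 : ℝ) • (B - A) + (s2 * c - 1) • (C - A) = 0 := by
      linear_combination (norm := module) hE3A - hv
    exact one_ne_zero (key _ _ h0).1
  obtain ⟨v, hP'b'⟩ := coll_ext hP'b hBE3
  have hP'B : P' - B = (-v) • (B - A) + (v * (1 - s2 * c)) • (C - A) := by
    rw [hP'b']; linear_combination (norm := module) v • hE3A
  have hrel12 : (u * (1 - s1 * b) + v - 1) • (B - A)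
      + (u * (1 - s1 * c) - v * (1 - s2 * c)) • (C - A) = 0 := by
    linear_combination (norm := module) hP'B - hP'A
  obtain ⟨hr1, hr2⟩ := key _ _ hrel12
  -- F3
  have hF3A : F3 - A = (1 - s3 * b) • (B - A) := by
    rw [hF3, Equiv.pointReflection_apply, hF0, hmid]
    simp only [vadd_eq_add, vsub_eq_sub]
    linear_combination (norm := module) (-1 : ℝ) • hFA
  have hCF3 : C ≠ F3 := by
    intro h
    have hv : F3 - C = 0 := by rw [← h, sub_self]
    have h0 : (1 - s3 * b) • (B - A) + (-1 : ℝ) • (C - A) = 0 := by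
      linear_combination (norm := module) hv - hF3A
    have := (key _ _ h0).2
    norm_num at this
  obtain ⟨w, hP'c'⟩ := coll_ext hP'c hCF3
  have hP'C : P' - C = (w * (1 - s3 * b)) • (B - A) + (-w) • (C - A) := by
    rw [hP'c']; linear_combination (norm := module) w • hF3A
  have hrel34 : (u * (1 - s1 * b) - w * (1 - s3 * b)) • (B - A)
      + (u * (1 - s1 * c) + w - 1) • (C - A) = 0 := by
    linear_combination (norm := module) hP'C - hP'A
  obtain ⟨hr3, hr4⟩ := key _ _ hrel34
  -- Q
  have hQA : Q - A = ((1 - u * (1 - s1 * b)) / 2) • (B - A)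
      + ((1 - u * (1 - s1 * c)) / 2) • (C - A) := by
    rw [hQ, AffineMap.homothety_apply, hG]
    simp only [vadd_eq_add, vsub_eq_sub]
    linear_combination (norm := module) (-(1/2 : ℝ)) • hP'A
  -- midpoints
  have hD0A : D0 - A = (1/2 : ℝ) • (B - A) + (1/2 : ℝ) • (C - A) := by
    rw [hD0, hmid]; module
  have hE0A : E0 - A = (1/2 : ℝ) • (C - A) := by rw [hE0, hmid]; module
  have hF0A : F0 - A = (1/2 : ℝ) • (B - A) := by rw [hF0, hmid]; module
  have hMdA : Md - A = (s1 * b / 2) • (B - A) + (s1 * c / 2) • (C - A) := by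
    rw [hMd, hmid]; linear_combination (norm := module) (1/2 : ℝ) • hDA
  have hMeA : Me - A = (1/2 : ℝ) • (B - A) + (s2 * c / 2) • (C - A) := by
    rw [hMe, hmid]; linear_combination (norm := module) (1/2 : ℝ) • hEA
  have hMfA : Mf - A = (s3 * b / 2) • (B - A) + (1/2 : ℝ) • (C - A) := by
    rw [hMf, hmid]; linear_combination (norm := module) (1/2 : ℝ) • hFA
  refine ⟨?_, ?_, ?_⟩
  · apply coll_mk D0 Md Q u
    have e1 : Q - D0 = (Q - A) - (D0 - A) := by abel
    have e2 : Md - D0 = (Md - A) - (D0 - A) := by abel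
    rw [e1, e2, hQA, hD0A, hMdA]
    match_scalars <;> ring
  · apply coll_mk E0 Me Q v
    have e1 : Q - E0 = (Q - A) - (E0 - A) := by abel
    have e2 : Me - E0 = (Me - A) - (E0 - A) := by abel
    rw [e1, e2, hQA, hE0A, hMeA]
    match_scalars
    · linear_combination (-(1/2 : ℝ)) * hr1
    · linear_combination (1/2 : ℝ) * hr1 + (1/2 : ℝ) * hr2
    · linear_combination (-(1/2 : ℝ)) * hr2
  · apply coll_mk F0 Mf Q w
    have e1 : Q - F0 = (Q - A) - (F0 - A) := by abel
    have e2 : Mf - F0 = (Mf - A) - (F0 - A) := by abel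
    rw [e1, e2, hQA, hF0A, hMfA]
    match_scalars
    · linear_combination (-(1/2 : ℝ)) * hr3
    · linear_combination (1/2 : ℝ) * hr3 + (1/2 : ℝ) * hr4
    · linear_combination (-(1/2 : ℝ)) * hr4
end

section
/- Let Md be the midpoint of AD. Then (i) if Q ≠ D0 and P' ≠ A, the line through D0 and Q is parallel to the line through A and P'; and (ii) K(D3) = Md, i.e. the image of D3 under the homothety with center G and ratio -1/2 equals the midpoint of AD. -/
open EuclideanGeometry Affine

local notation "Pt" => EuclideanSpace ℝ (Fin 2)
theorem stmt_1 (A B C G P D E F D0 E0 F0 D3 E3 F3 P' Q Md : Pt)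
(hABC : AffineIndependent ℝ ![A, B, C])
    (hG : G = (1/3 : ℝ) • (A + B + C))
    (hPa : ¬ Collinear ℝ {B, C, P})
    (hPb : ¬ Collinear ℝ {C, A, P})
    (hPc : ¬ Collinear ℝ {A, B, P})
    (hD : Collinear ℝ {B, C, D}) (hDcev : Collinear ℝ {A, P, D})
    (hE : Collinear ℝ {C, A, E}) (hEcev : Collinear ℝ {B, P, E})
    (hF : Collinear ℝ {A, B, F}) (hFcev : Collinear ℝ {C, P, F})
    (hD0 : D0 = midpoint ℝ B C) (hE0 : E0 = midpoint ℝ C A) (hF0 : F0 = midpoint ℝ A B)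
(hD3 : D3 = Equiv.pointReflection D0 D)
    (hE3 : E3 = Equiv.pointReflection E0 E)
    (hF3 : F3 = Equiv.pointReflection F0 F)
(hP'a : Collinear ℝ {A, D3, P'})
    (hP'b : Collinear ℝ {B, E3, P'})
    (hP'c : Collinear ℝ {C, F3, P'})
    (hQ : Q = AffineMap.homothety G (-1/2 : ℝ) P')
    (hMd : Md = midpoint ℝ A D) :
    (Q ≠ D0 → P' ≠ A → line[ℝ, D0, Q] ∥ line[ℝ, A, P']) ∧
      AffineMap.homothety G (-1/2 : ℝ) D3 = Md := by
  have hkey : Q -ᵥ D0 = (-1/2:ℝ) • (P' -ᵥ A) := by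
    subst hQ hD0 hG
    simp only [AffineMap.homothety_apply, vsub_eq_sub, vadd_eq_add, midpoint_eq_smul_add, (by norm_num : (⅟2:ℝ) = 1/2)]
    module
  constructor
  · intro _ _
    rw [AffineSubspace.affineSpan_pair_parallel_iff_vectorSpan_eq,
      vectorSpan_pair, vectorSpan_pair]
    have h1 : D0 -ᵥ Q = (1/2:ℝ) • (P' -ᵥ A) := by
      rw [← neg_vsub_eq_vsub_rev, hkey]; module
    have h2 : A -ᵥ P' = (-1:ℝ) • (P' -ᵥ A) := by
      rw [← neg_vsub_eq_vsub_rev]; module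
    rw [h1, h2, Submodule.span_singleton_smul_eq (by norm_num : IsUnit (1/2:ℝ)),
      Submodule.span_singleton_smul_eq (by norm_num : IsUnit (-1:ℝ))]
  · subst hD3 hD0 hMd hG
    simp only [AffineMap.homothety_apply, Equiv.pointReflection_apply,
      vsub_eq_sub, vadd_eq_add, midpoint_eq_smul_add, (by norm_num : (⅟2:ℝ) = 1/2)]
    module
end

section
/- (Midpoint Perspectivity Theorem) The triangles A_bE0M_e and A_cF0M_f are perspective: either there exists a point O lying simultaneously on line A_bA_c, on line E0F0, and on line M_eM_f, or these three lines are pairwise parallel. -/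
open EuclideanGeometry Affine

local notation "Pt" => EuclideanSpace ℝ (Fin 2)

theorem stmt_2 (A B C E F E0 F0 Ab Ac Me Mf : Pt)
    (hABC : AffineIndependent ℝ ![A, B, C])
    (hE : Collinear ℝ {A, C, E}) (hF : Collinear ℝ {A, B, F})
    (hEA : E ≠ A) (hEB : E ≠ B) (hEC : E ≠ C)
    (hFA : F ≠ A) (hFB : F ≠ B) (hFC : F ≠ C)
    (hE0 : E0 = midpoint ℝ A C) (hF0 : F0 = midpoint ℝ A B)
    (hAb : Ab = midpoint ℝ A E) (hAc : Ac = midpoint ℝ A F)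
    (hMe : Me = midpoint ℝ B E) (hMf : Mf = midpoint ℝ C F)
    (hAbAc : Ab ≠ Ac) (hMeMf : Me ≠ Mf) :
    (∃ O : Pt, O ∈ line[ℝ, Ab, Ac] ∧ O ∈ line[ℝ, E0, F0] ∧ O ∈ line[ℝ, Me, Mf]) ∨
      (line[ℝ, Ab, Ac] ∥ line[ℝ, E0, F0] ∧ line[ℝ, E0, F0] ∥ line[ℝ, Me, Mf] ∧
        line[ℝ, Ab, Ac] ∥ line[ℝ, Me, Mf]) := by
  have hAC : A ≠ C := by
    have := hABC.injective.ne (a₁ := (0 : Fin 3)) (a₂ := 2) (by decide)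
    simpa using this
  have hAB : A ≠ B := by
    have := hABC.injective.ne (a₁ := (0 : Fin 3)) (a₂ := 1) (by decide)
    simpa using this
  -- extract scalar parameters
  have hEmem : E ∈ line[ℝ, A, C] :=
    hE.mem_affineSpan_of_mem_of_ne (Set.mem_insert _ _)
      (by simp) (by simp) hAC
  have hFmem : F ∈ line[ℝ, A, B] :=
    hF.mem_affineSpan_of_mem_of_ne (Set.mem_insert _ _)
      (by simp) (by simp) hAB
  rw [show E = (E -ᵥ A) +ᵥ A by simp] at hEmem
  rw [show F = (F -ᵥ A) +ᵥ A by simp] at hFmem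
  obtain ⟨e, he⟩ := vadd_left_mem_affineSpan_pair.mp hEmem
  obtain ⟨f, hf⟩ := vadd_left_mem_affineSpan_pair.mp hFmem
  simp only [vsub_eq_sub] at he hf
  have hEeq : E = e • (C - A) + A := by rw [he]; abel
  have hFeq : F = f • (B - A) + A := by rw [hf]; abel
  have he0 : e ≠ 0 := by
    rintro rfl; apply hEA; rw [hEeq]; simp
  have he1 : e ≠ 1 := by
    rintro rfl; apply hEC; rw [hEeq]; simp
  have hf1 : f ≠ 1 := by
    rintro rfl; apply hFB; rw [hFeq]; simp
  subst hE0 hF0 hAb hAc hMe hMf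
  by_cases hef : e = f
  · -- parallel case
    right
    have h1 : midpoint ℝ A E -ᵥ midpoint ℝ A F
        = e • (midpoint ℝ A C -ᵥ midpoint ℝ A B) := by
      simp only [vsub_eq_sub, midpoint_eq_smul_add, invOf_eq_inv, hEeq, hFeq, hef]
      match_scalars <;> ring
    have h2 : midpoint ℝ B E -ᵥ midpoint ℝ C F
        = (e - 1) • (midpoint ℝ A C -ᵥ midpoint ℝ A B) := by
      simp only [vsub_eq_sub, midpoint_eq_smul_add, invOf_eq_inv, hEeq, hFeq, hef]
      match_scalars <;> ring
    have p1 : line[ℝ, midpoint ℝ A E, midpoint ℝ A F] ∥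
        line[ℝ, midpoint ℝ A C, midpoint ℝ A B] := by
      rw [AffineSubspace.affineSpan_pair_parallel_iff_vectorSpan_eq,
        vectorSpan_pair, vectorSpan_pair, h1,
        Submodule.span_singleton_smul_eq (isUnit_iff_ne_zero.mpr he0)]
    have p2 : line[ℝ, midpoint ℝ A C, midpoint ℝ A B] ∥
        line[ℝ, midpoint ℝ B E, midpoint ℝ C F] := by
      rw [AffineSubspace.affineSpan_pair_parallel_iff_vectorSpan_eq,
        vectorSpan_pair, vectorSpan_pair, h2,
        Submodule.span_singleton_smul_eq
          (isUnit_iff_ne_zero.mpr (sub_ne_zero.mpr he1))]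
    exact ⟨p1, p2, p1.trans p2⟩
  · -- intersection case
    left
    have hfe : f - e ≠ 0 := sub_ne_zero.mpr (Ne.symm hef)
    refine ⟨AffineMap.lineMap (midpoint ℝ A E) (midpoint ℝ A F) ((1 - e) / (f - e)),
      AffineMap.lineMap_mem_affineSpan_pair _ _ _, ?_, ?_⟩
    · have : AffineMap.lineMap (midpoint ℝ A E) (midpoint ℝ A F) ((1 - e) / (f - e))
          = AffineMap.lineMap (midpoint ℝ A C) (midpoint ℝ A B) (f * (1 - e) / (f - e)) := by
        simp only [AffineMap.lineMap_apply_module, midpoint_eq_smul_add, invOf_eq_inv,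
          hEeq, hFeq]
        match_scalars <;> field_simp <;> ring
      rw [this]
      exact AffineMap.lineMap_mem_affineSpan_pair _ _ _
    · have : AffineMap.lineMap (midpoint ℝ A E) (midpoint ℝ A F) ((1 - e) / (f - e))
          = AffineMap.lineMap (midpoint ℝ B E) (midpoint ℝ C F) (-e / (f - e)) := by
        simp only [AffineMap.lineMap_apply_module, midpoint_eq_smul_add, invOf_eq_inv,
          hEeq, hFeq]
        match_scalars <;> field_simp <;> ring
      rw [this]
      exact AffineMap.lineMap_mem_affineSpan_pair _ _ _
end

section
/- Let A0, B0, C0 be the midpoints of EF, FD, DE respectively. Then the lines AA0, BB0, CC0 all pass through the isotomcomplement Q of P; that is, each of the triples {A, A0, Q}, {B, B0, Q}, {C, C0, Q} is collinear. -/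
open EuclideanGeometry Affine

local notation "Pt" => EuclideanSpace ℝ (Fin 2)

private theorem coll_iff' {u v : Pt} (hu : ∀ a b : ℝ, a • u + b • v = 0 → a = 0 ∧ b = 0)
    (hspan : ∀ w : Pt, ∃ a b : ℝ, w = a • u + b • v)
    {X Y Z : Pt} {a b c d : ℝ} (hY : Y - X = a • u + b • v) (hZ : Z - X = c • u + d • v) :
    Collinear ℝ ({X, Y, Z} : Set Pt) ↔ a * d - b * c = 0 := by
  constructor
  · intro h
    rw [collinear_iff_of_mem (Set.mem_insert X _)] at h
    obtain ⟨w, hw⟩ := h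
    obtain ⟨m, n, hmn⟩ := hspan w
    obtain ⟨rY, hrY⟩ := hw Y (by simp)
    obtain ⟨rZ, hrZ⟩ := hw Z (by simp)
    rw [vadd_eq_add] at hrY hrZ
    have hY2 : a • u + b • v = rY • (m • u + n • v) := by
      rw [← hmn, ← hY, hrY]; abel
    have hZ2 : c • u + d • v = rZ • (m • u + n • v) := by
      rw [← hmn, ← hZ, hrZ]; abel
    have h1 := hu (a - rY*m) (b - rY*n) (by linear_combination (norm := module) hY2)
    have h2 := hu (c - rZ*m) (d - rZ*n) (by linear_combination (norm := module) hZ2)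
    have ha : a = rY*m := by linarith [h1.1]
    have hb : b = rY*n := by linarith [h1.2]
    have hc : c = rZ*m := by linarith [h2.1]
    have hd : d = rZ*n := by linarith [h2.2]
    rw [ha, hb, hc, hd]; ring
  · intro h
    have coll3 : ∀ (k : ℝ) (W : Pt), Z - X = k • (W - X) → Y - X = (1:ℝ) • (W - X) →
        Collinear ℝ ({X, Y, Z} : Set Pt) := by
      intro k W hk h1
      rw [collinear_iff_of_mem (Set.mem_insert X _)]
      refine ⟨W - X, ?_⟩
      rintro R hR
      simp only [Set.mem_insert_iff, Set.mem_singleton_iff] at hR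
      rcases hR with rfl | rfl | rfl
      · exact ⟨0, by simp⟩
      · exact ⟨1, by rw [vadd_eq_add, ← h1]; abel⟩
      · exact ⟨k, by rw [vadd_eq_add, ← hk]; abel⟩
    by_cases ha : a = 0
    · by_cases hb : b = 0
      · have hYX : Y = X := by
          have : Y - X = 0 := by rw [hY, ha, hb]; simp
          rwa [sub_eq_zero] at this
        subst hYX
        have : ({Y, Y, Z} : Set Pt) = {Y, Z} := by simp
        rw [this]
        exact collinear_pair ℝ Y Z
      · have hc : c = 0 := by
          have : b * c = 0 := by linear_combination -h + d * ha
          rcases mul_eq_zero.mp this with h' | h'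
          · exact absurd h' hb
          · exact h'
        apply coll3 (d/b) Y
        · rw [hZ, hY, ha, hc]
          match_scalars <;> field_simp <;> ring
        · rw [one_smul]
    · apply coll3 (c/a) Y
      · rw [hZ, hY]
        match_scalars
        · field_simp
        · rw [div_mul_eq_mul_div, eq_comm, div_eq_iff ha]
          linear_combination -h
      · rw [one_smul]

private theorem alg (p q d1 d2 e1 e2 f1 f2 s t : ℝ)
    (hp : ¬ p = 0) (hq : ¬ q = 0) (ha : ¬ (1 - p - q) = 0)
    (h1 : (-1)*d2 - 1*(d1-1) = 0)
    (h2 : p*d2 - q*d1 = 0)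
    (h3 : 0*(e2-1) - (-1)*e1 = 0)
    (h4 : (p-1)*e2 - q*(e1-1) = 0)
    (h5 : 1*f2 - 0*f1 = 0)
    (h6 : p*(f2-1) - (q-1)*f1 = 0)
    (h7 : (1-d1)*t - (1-d2)*s = 0)
    (h8 : (-e1-1)*t - (1-e2)*(s-1) = 0)
    (h9 : (1-f1)*(t-1) - (-1-f2)*s = 0) :
    (e1+f1)/2 * ((1-t)/2) - (e2+f2)/2 * ((1-s)/2) = 0
    ∧ ((f1+d1)/2 - 1) * ((1-t)/2) - (f2+d2)/2 * ((-1-s)/2) = 0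
    ∧ (d1+e1)/2 * ((-1-t)/2) - ((d2+e2)/2 - 1) * ((1-s)/2) = 0 := by
  have he1 : e1 = 0 := by linarith
  have hf2 : f2 = 0 := by linarith
  subst he1 hf2
  have hpq : p + q ≠ 0 := by
    intro h
    apply hp
    have h' : p * (d1 + d2) = 0 := by linear_combination h2 + d1 * h
    have hdd : d1 + d2 = 1 := by linarith
    rw [hdd, mul_one] at h'
    exact h'
  have hd1' : d1 * (p + q) = p := by linear_combination -p*h1 - h2
  have hd2' : d2 * (p + q) = q := by linear_combination -q*h1 + h2
  have hp1 : (1:ℝ) - p ≠ 0 := by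
    intro h
    apply hq
    linear_combination h4 + e2*h
  have he2' : e2 * (1 - p) = q := by linear_combination -h4
  have hq1 : (1:ℝ) - q ≠ 0 := by
    intro h
    apply hp
    linear_combination -h6 + f1*h
  have hf1' : f1 * (1 - q) = p := by linear_combination h6
  have h7' : q * t = p * s := by linear_combination (p+q)*h7 + t*hd1' - s*hd2'
  have ht' : t * (p + q - p^2 - p*q - q^2) = p * (1 - p - q) := by
    linear_combination (-p*(1-p))*h8 + (p*(s-1))*he2' + (1-p-q)*h7'
  have hsig : (p + q - p^2 - p*q - q^2) ≠ 0 := by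
    intro h0
    apply mul_ne_zero hp ha
    rw [← ht', h0, mul_zero]
  have hs' : s * (p + q - p^2 - p*q - q^2) = q * (1 - p - q) := by
    apply mul_left_cancel₀ hp
    linear_combination -(p + q - p^2 - p*q - q^2)*h7' + q*ht'
  have hd1 : d1 = p / (p + q) := by rw [eq_div_iff hpq]; exact hd1'
  have hd2 : d2 = q / (p + q) := by rw [eq_div_iff hpq]; exact hd2'
  have he2 : e2 = q / (1 - p) := by rw [eq_div_iff hp1]; exact he2'
  have hf1 : f1 = p / (1 - q) := by rw [eq_div_iff hq1]; exact hf1'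
  have hs : s = q * (1 - p - q) / (p + q - p^2 - p*q - q^2) := by
    rw [eq_div_iff hsig]; exact hs'
  have ht : t = p * (1 - p - q) / (p + q - p^2 - p*q - q^2) := by
    rw [eq_div_iff hsig]; exact ht'
  subst hd1 hd2 he2 hf1 hs ht
  refine ⟨?_, ?_, ?_⟩ <;> (field_simp; ring)

theorem stmt_3 (A B C G P D E F D0 E0 F0 D3 E3 F3 P' Q A0 B0 C0 : Pt)
(hABC : AffineIndependent ℝ ![A, B, C])
    (hG : G = (1/3 : ℝ) • (A + B + C))
    (hPa : ¬ Collinear ℝ {B, C, P})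
    (hPb : ¬ Collinear ℝ {C, A, P})
    (hPc : ¬ Collinear ℝ {A, B, P})
    (hD : Collinear ℝ {B, C, D}) (hDcev : Collinear ℝ {A, P, D})
    (hE : Collinear ℝ {C, A, E}) (hEcev : Collinear ℝ {B, P, E})
    (hF : Collinear ℝ {A, B, F}) (hFcev : Collinear ℝ {C, P, F})
    (hD0 : D0 = midpoint ℝ B C) (hE0 : E0 = midpoint ℝ C A) (hF0 : F0 = midpoint ℝ A B)
(hD3 : D3 = Equiv.pointReflection D0 D)
    (hE3 : E3 = Equiv.pointReflection E0 E)
    (hF3 : F3 = Equiv.pointReflection F0 F)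
(hP'a : Collinear ℝ {A, D3, P'})
    (hP'b : Collinear ℝ {B, E3, P'})
    (hP'c : Collinear ℝ {C, F3, P'})
    (hQ : Q = AffineMap.homothety G (-1/2 : ℝ) P')
    (hA0 : A0 = midpoint ℝ E F) (hB0 : B0 = midpoint ℝ F D) (hC0 : C0 = midpoint ℝ D E) :
    Collinear ℝ {A, A0, Q} ∧ Collinear ℝ {B, B0, Q} ∧ Collinear ℝ {C, C0, Q} := by
  have hnc : ¬ Collinear ℝ ({A, B, C} : Set Pt) :=
    affineIndependent_iff_not_collinear_set.mp hABC
  -- linear independence of B-A, C-A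
  have hu : ∀ a b : ℝ, a • (B-A) + b • (C-A) = 0 → a = 0 ∧ b = 0 := by
    intro a b hab
    by_cases ha : a = 0
    · subst ha
      refine ⟨rfl, ?_⟩
      by_contra hb
      apply hnc
      have hCA : C - A = 0 := by
        have := smul_eq_zero.mp (by linear_combination (norm := module) hab : b • (C - A) = 0)
        tauto
      rw [collinear_iff_of_mem (Set.mem_insert A _)]
      refine ⟨B - A, ?_⟩
      rintro W hW
      simp only [Set.mem_insert_iff, Set.mem_singleton_iff] at hW
      rcases hW with rfl | rfl | rfl
      · exact ⟨0, by simp⟩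
      · exact ⟨1, by simp⟩
      · exact ⟨0, by rw [vadd_eq_add, zero_smul, zero_add, ← sub_eq_zero]; exact hCA⟩
    · exfalso
      apply hnc
      have h3 : B - A = (-(b/a)) • (C - A) := by
        rw [← sub_eq_zero]
        have : B - A - (-(b/a)) • (C - A) = (a⁻¹) • (a • (B-A) + b • (C-A)) := by
          match_scalars <;> field_simp <;> ring
        rw [this, hab, smul_zero]
      rw [collinear_iff_of_mem (Set.mem_insert A _)]
      refine ⟨C - A, ?_⟩
      rintro W hW
      simp only [Set.mem_insert_iff, Set.mem_singleton_iff] at hW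
      rcases hW with rfl | rfl | rfl
      · exact ⟨0, by simp⟩
      · exact ⟨-(b/a), by rw [vadd_eq_add, ← h3]; abel⟩
      · exact ⟨1, by simp⟩
  have hli : LinearIndependent ℝ ![B-A, C-A] := LinearIndependent.pair_iff.mpr hu
  have hspan : ∀ w : Pt, ∃ a b : ℝ, w = a • (B-A) + b • (C-A) := by
    intro w
    have h1 : Submodule.span ℝ (Set.range ![B-A, C-A]) = ⊤ := by
      apply Submodule.eq_top_of_finrank_eq
      rw [finrank_span_eq_card hli]
      simp [finrank_euclideanSpace_fin]
    have h2 : w ∈ Submodule.span ℝ ({B-A, C-A} : Set Pt) := by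
      have hr : Set.range ![B-A, C-A] = {B-A, C-A} := by
        rw [Set.pair_comm]
        simp [Matrix.range_cons, Matrix.range_empty]
      rw [← hr, h1]; trivial
    obtain ⟨a, b, hab⟩ := Submodule.mem_span_pair.mp h2
    exact ⟨a, b, hab.symm⟩
  -- coordinates
  obtain ⟨pa, pb, cPA⟩ := hspan (P - A)
  obtain ⟨dd1, dd2, cDA⟩ := hspan (D - A)
  obtain ⟨ee1, ee2, cEA⟩ := hspan (E - A)
  obtain ⟨ff1, ff2, cFA⟩ := hspan (F - A)
  obtain ⟨ss, tt, cP'A⟩ := hspan (P' - A)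
  have cB : B - A = (1:ℝ) • (B-A) + (0:ℝ) • (C-A) := by module
  have cCB : C - B = (-1:ℝ) • (B-A) + (1:ℝ) • (C-A) := by module
  have cAC : A - C = (0:ℝ) • (B-A) + (-1:ℝ) • (C-A) := by module
  have cPB : P - B = (pa-1) • (B-A) + pb • (C-A) := by
    linear_combination (norm := module) cPA
  have cPC : P - C = pa • (B-A) + (pb-1) • (C-A) := by
    linear_combination (norm := module) cPA
  have cDB : D - B = (dd1-1) • (B-A) + dd2 • (C-A) := by
    linear_combination (norm := module) cDA
  have cEB : E - B = (ee1-1) • (B-A) + ee2 • (C-A) := by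
    linear_combination (norm := module) cEA
  have cEC : E - C = ee1 • (B-A) + (ee2-1) • (C-A) := by
    linear_combination (norm := module) cEA
  have cFC : F - C = ff1 • (B-A) + (ff2-1) • (C-A) := by
    linear_combination (norm := module) cFA
  have cP'B : P' - B = (ss-1) • (B-A) + tt • (C-A) := by
    linear_combination (norm := module) cP'A
  have cP'C : P' - C = ss • (B-A) + (tt-1) • (C-A) := by
    linear_combination (norm := module) cP'A
  -- reflected points
  have cD3A : D3 - A = (1-dd1) • (B-A) + (1-dd2) • (C-A) := by
    have hm : midpoint ℝ B C + midpoint ℝ B C = B + C := midpoint_add_self ℝ B C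
    rw [hD3, Equiv.pointReflection_apply, hD0]
    simp only [vsub_eq_sub, vadd_eq_add]
    linear_combination (norm := module) hm - cDA
  have cE3B : E3 - B = (-ee1-1) • (B-A) + (1-ee2) • (C-A) := by
    have hm : midpoint ℝ C A + midpoint ℝ C A = C + A := midpoint_add_self ℝ C A
    rw [hE3, Equiv.pointReflection_apply, hE0]
    simp only [vsub_eq_sub, vadd_eq_add]
    linear_combination (norm := module) hm - cEA
  have cF3C : F3 - C = (1-ff1) • (B-A) + (-1-ff2) • (C-A) := by
    have hm : midpoint ℝ A B + midpoint ℝ A B = A + B := midpoint_add_self ℝ A B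
    rw [hF3, Equiv.pointReflection_apply, hF0]
    simp only [vsub_eq_sub, vadd_eq_add]
    linear_combination (norm := module) hm - cFA
  -- Q and midpoints of cevian triangle
  have cQA : Q - A = ((1-ss)/2) • (B-A) + ((1-tt)/2) • (C-A) := by
    rw [hQ, AffineMap.homothety_apply, hG]
    simp only [vsub_eq_sub, vadd_eq_add]
    linear_combination (norm := module) (-1/2 : ℝ) • cP'A
  have cQB : Q - B = ((-1-ss)/2) • (B-A) + ((1-tt)/2) • (C-A) := by
    linear_combination (norm := module) cQA
  have cQC : Q - C = ((1-ss)/2) • (B-A) + ((-1-tt)/2) • (C-A) := by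
    linear_combination (norm := module) cQA
  have cA0A : A0 - A = ((ee1+ff1)/2) • (B-A) + ((ee2+ff2)/2) • (C-A) := by
    have hm : midpoint ℝ E F + midpoint ℝ E F = E + F := midpoint_add_self ℝ E F
    rw [hA0]
    linear_combination (norm := module) (1/2 : ℝ) • hm + (1/2 : ℝ) • cEA + (1/2 : ℝ) • cFA
  have cB0B : B0 - B = ((ff1+dd1)/2 - 1) • (B-A) + ((ff2+dd2)/2) • (C-A) := by
    have hm : midpoint ℝ F D + midpoint ℝ F D = F + D := midpoint_add_self ℝ F D
    rw [hB0]
    linear_combination (norm := module) (1/2 : ℝ) • hm + (1/2 : ℝ) • cFA + (1/2 : ℝ) • cDA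
  have cC0C : C0 - C = ((dd1+ee1)/2) • (B-A) + ((dd2+ee2)/2 - 1) • (C-A) := by
    have hm : midpoint ℝ D E + midpoint ℝ D E = D + E := midpoint_add_self ℝ D E
    rw [hC0]
    linear_combination (norm := module) (1/2 : ℝ) • hm + (1/2 : ℝ) • cDA + (1/2 : ℝ) • cEA
  -- translate hypotheses to scalar equations
  have qPa : ¬ ((-1) * pb - 1 * (pa-1) = 0) :=
    fun h => hPa ((coll_iff' hu hspan cCB cPB).mpr h)
  have qPb : ¬ (0 * (pb-1) - (-1) * pa = 0) :=
    fun h => hPb ((coll_iff' hu hspan cAC cPC).mpr h)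
  have qPc : ¬ (1 * pb - 0 * pa = 0) :=
    fun h => hPc ((coll_iff' hu hspan cB cPA).mpr h)
  have qD := (coll_iff' hu hspan cCB cDB).mp hD
  have qDc := (coll_iff' hu hspan cPA cDA).mp hDcev
  have qE := (coll_iff' hu hspan cAC cEC).mp hE
  have qEc := (coll_iff' hu hspan cPB cEB).mp hEcev
  have qF := (coll_iff' hu hspan cB cFA).mp hF
  have qFc := (coll_iff' hu hspan cPC cFC).mp hFcev
  have qP'a := (coll_iff' hu hspan cD3A cP'A).mp hP'a
  have qP'b := (coll_iff' hu hspan cE3B cP'B).mp hP'b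
  have qP'c := (coll_iff' hu hspan cF3C cP'C).mp hP'c
  -- nondegeneracy in scalar form
  have hp : ¬ pa = 0 := fun h => qPb (by linarith)
  have hq : ¬ pb = 0 := fun h => qPc (by linarith)
  have ha : ¬ (1 - pa - pb) = 0 := fun h => qPa (by linarith)
  have key := alg pa pb dd1 dd2 ee1 ee2 ff1 ff2 ss tt hp hq ha
    qD qDc qE qEc qF qFc qP'a qP'b qP'c
  exact ⟨(coll_iff' hu hspan cA0A cQA).mpr key.1,
    (coll_iff' hu hspan cB0B cQB).mpr key.2.1,
    (coll_iff' hu hspan cC0C cQC).mpr key.2.2⟩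
end

section
/- Let R be the midpoint of AP, A0 the midpoint of EF, Q' = K(P), and M = K(Q'). Then the points D0, R, A0 are collinear, and M is the midpoint of the segment D0R. -/
open EuclideanGeometry Affine

local notation "Pt" => EuclideanSpace ℝ (Fin 2)

private lemma coll3' {p₁ p₂ p₃ : Pt} (h : Collinear ℝ ({p₁, p₂, p₃} : Set Pt)) (hne : p₁ ≠ p₂) :
    ∃ r : ℝ, p₃ = r • (p₂ - p₁) + p₁ := by
  have h3 : p₃ ∈ line[ℝ, p₁, p₂] :=
    h.mem_affineSpan_of_mem_of_ne (by simp) (by simp) (by simp) hne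
  rw [← vsub_vadd p₃ p₁] at h3
  obtain ⟨r, hr⟩ := vadd_left_mem_affineSpan_pair.mp h3
  refine ⟨r, ?_⟩
  have : p₃ - p₁ = r • (p₂ - p₁) := by simpa [vsub_eq_sub] using hr.symm
  rw [← this]; abel

private lemma indep2 {A B C : Pt} (hABC : AffineIndependent ℝ ![A, B, C]) {a b : ℝ}
    (hab : a • (B - A) + b • (C - A) = 0) : a = 0 ∧ b = 0 := by
  have hnc : ¬ Collinear ℝ ({A, B, C} : Set Pt) :=
    affineIndependent_iff_not_collinear_set.mp hABC
  have key : ∀ {X Y Z : Pt} {c d : ℝ}, ¬ Collinear ℝ ({X, Y, Z} : Set Pt) →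
      c • (Y - X) + d • (Z - X) = 0 → d = 0 := by
    intro X Y Z c d hnc' h
    by_contra hd
    apply hnc'
    have h1 : d • (Z - X) = (-c) • (Y - X) := by linear_combination (norm := module) h
    have h2 : Z = (d⁻¹ * (-c)) • (Y - X) + X := by
      rw [mul_smul, ← h1, inv_smul_smul₀ hd]; abel
    have hmem : Z ∈ line[ℝ, X, Y] := by
      rw [show Z = (d⁻¹ * (-c)) • (Y -ᵥ X) +ᵥ X from h2]
      exact smul_vsub_vadd_mem_affineSpan_pair _ _ _
    have := collinear_insert_of_mem_affineSpan_pair hmem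
    have hset : ({Z, X, Y} : Set Pt) = {X, Y, Z} := by ext x; simp; tauto
    rwa [hset] at this
  have hb : b = 0 := key hnc hab
  have hnc2 : ¬ Collinear ℝ ({A, C, B} : Set Pt) := by
    intro hcol
    apply hnc
    have hset : ({A, C, B} : Set Pt) = {A, B, C} := by ext x; simp; tauto
    rwa [hset] at hcol
  have ha : a = 0 := key hnc2 (by linear_combination (norm := module) hab)
  exact ⟨ha, hb⟩

private lemma barycoords {A B C P : Pt} (hABC : AffineIndependent ℝ ![A, B, C]) :
    ∃ x y : ℝ, P = A + x • (B - A) + y • (C - A) := by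
  have htop : affineSpan ℝ (Set.range ![A,B,C]) = ⊤ := by
    rw [hABC.affineSpan_eq_top_iff_card_eq_finrank_add_one]
    simp [finrank_euclideanSpace_fin]
  have hPmem : P ∈ affineSpan ℝ (Set.range ![A,B,C]) := htop ▸ AffineSubspace.mem_top ℝ _ P
  obtain ⟨w, hw, hPw⟩ := eq_affineCombination_of_mem_affineSpan_of_fintype hPmem
  refine ⟨w 1, w 2, ?_⟩
  rw [hPw, Finset.affineCombination_eq_linear_combination _ _ _ hw]
  have hw0 : w 0 = 1 - w 1 - w 2 := by
    have := hw; rw [Fin.sum_univ_three] at this; linarith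
  simp [Fin.sum_univ_three, hw0]
  module

private lemma hmid (a b : Pt) : midpoint ℝ a b = (1/2 : ℝ) • a + (1/2 : ℝ) • b := by
  rw [midpoint_eq_smul_add, invOf_eq_inv, smul_add]; norm_num

theorem stmt_5 (A B C G P D E F D0 E0 F0 R A0 Q' M : Pt)
(hABC : AffineIndependent ℝ ![A, B, C])
    (hG : G = (1/3 : ℝ) • (A + B + C))
    (hPa : ¬ Collinear ℝ {B, C, P})
    (hPb : ¬ Collinear ℝ {C, A, P})
    (hPc : ¬ Collinear ℝ {A, B, P})
    (hD : Collinear ℝ {B, C, D}) (hDcev : Collinear ℝ {A, P, D})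
    (hE : Collinear ℝ {C, A, E}) (hEcev : Collinear ℝ {B, P, E})
    (hF : Collinear ℝ {A, B, F}) (hFcev : Collinear ℝ {C, P, F})
    (hD0 : D0 = midpoint ℝ B C) (hE0 : E0 = midpoint ℝ C A) (hF0 : F0 = midpoint ℝ A B)
    (hR : R = midpoint ℝ A P) (hA0 : A0 = midpoint ℝ E F)
    (hQ' : Q' = AffineMap.homothety G (-1/2 : ℝ) P)
    (hM : M = AffineMap.homothety G (-1/2 : ℝ) Q') :
    Collinear ℝ {D0, R, A0} ∧ M = midpoint ℝ D0 R := by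
  have hinj := hABC.injective
  have hCA : C ≠ A := fun h => by
    have : (2 : Fin 3) = 0 := hinj (by simpa using h)
    simp at this
  have hAB : A ≠ B := fun h => by
    have : (0 : Fin 3) = 1 := hinj (by simpa using h)
    simp at this
  have hBP : B ≠ P := fun h => hPc (by rw [← h]; simpa using collinear_pair ℝ A B)
  have hCP : C ≠ P := fun h => hPa (by rw [← h]; simpa using collinear_pair ℝ B C)
  obtain ⟨x, y, hP⟩ := barycoords (P := P) hABC
  obtain ⟨t, hE1⟩ := coll3' hE hCA
  obtain ⟨s, hE2⟩ := coll3' hEcev hBP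
  obtain ⟨u, hF1⟩ := coll3' hF hAB
  obtain ⟨v, hF2⟩ := coll3' hFcev hCP
  subst hP
  -- relations from E
  have hEq : (1 + s*(x-1)) • (B - A) + (s*y - (1 - t)) • (C - A) = 0 := by
    linear_combination (norm := module) hE2.symm.trans hE1
  obtain ⟨h1, h2⟩ := indep2 hABC hEq
  -- relations from F
  have hFq : (u - v*x) • (B - A) + (-1 - v*(y-1)) • (C - A) = 0 := by
    linear_combination (norm := module) hF1.symm.trans hF2
  obtain ⟨h3, h4⟩ := indep2 hABC hFq
  have hs : s * (1 - x) = 1 := by linear_combination -h1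
  have hv : v * (1 - y) = 1 := by linear_combination h4
  have hx : (1 : ℝ) - x ≠ 0 := fun h => by simp [h] at hs
  have hy : (1 : ℝ) - y ≠ 0 := fun h => by simp [h] at hv
  have hs' : s = (1 - x)⁻¹ := by field_simp; linear_combination hs
  have hv' : v = (1 - y)⁻¹ := by field_simp; linear_combination hv
  have ht : t = 1 - (1 - x)⁻¹ * y := by rw [← hs']; linear_combination h2
  have hu : u = (1 - y)⁻¹ * x := by rw [← hv']; linear_combination h3
  subst hs' hv' ht hu
  subst hE1 hF1 hD0 hR hA0 hQ' hM hG
  constructor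
  · rw [collinear_iff_of_mem (Set.mem_insert _ _)]
    refine ⟨midpoint ℝ A (A + x • (B - A) + y • (C - A)) - midpoint ℝ B C, ?_⟩
    intro p hp
    simp only [Set.mem_insert_iff, Set.mem_singleton_iff] at hp
    rcases hp with rfl | rfl | rfl
    · exact ⟨0, by simp⟩
    · exact ⟨1, by simp [vadd_eq_add]⟩
    · refine ⟨(1 - x - y)/((1 - x)*(1 - y)), ?_⟩
      simp only [vadd_eq_add, hmid]
      match_scalars
      · field_simp
        ring
      · field_simp
        ring
      · field_simp
        ring
  · simp only [AffineMap.homothety_apply, vsub_eq_sub, vadd_eq_add, hmid]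
    module
end

section
/- Let t be a real number with D = B + t·(C − B) (so D divides BC in signed ratio BD/DC = t/(1−t)), and let X = F + t·(E − F) (the point of EF with FX/XE = BD/DC). Let A0 be the midpoint of EF. If X ≠ D and A0 ≠ A, then the line DX is parallel to the line AA0. -/
open EuclideanGeometry Affine

local notation "Pt" => EuclideanSpace ℝ (Fin 2)

private lemma aux_col_ex {p1 p2 p3 : Pt} (h : Collinear ℝ {p1, p2, p3}) (h12 : p1 ≠ p2) :
    ∃ r : ℝ, p3 - p1 = r • (p2 - p1) := by
  have hmem : p3 ∈ line[ℝ, p1, p2] :=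
    h.mem_affineSpan_of_mem_of_ne (by simp) (by simp) (by simp) h12
  rw [show p3 = (p3 -ᵥ p1) +ᵥ p1 from (vsub_vadd _ _).symm,
    vadd_left_mem_affineSpan_pair] at hmem
  obtain ⟨r, hr⟩ := hmem
  refine ⟨r, ?_⟩
  simp only [vsub_eq_sub] at hr
  rw [← hr]

private lemma aux_indep {p1 p2 p3 : Pt} (h : ¬ Collinear ℝ {p1, p2, p3}) :
    ∀ x y : ℝ, x • (p2 - p1) + y • (p3 - p1) = 0 → x = 0 ∧ y = 0 := by
  intro x y hxy
  have h12 : p1 ≠ p2 := by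
    rintro rfl
    apply h
    have hset : ({p1, p1, p3} : Set Pt) = {p1, p3} := by
      ext z; constructor <;> intro hz <;> simp at hz ⊢ <;> tauto
    rw [hset]; exact collinear_pair ℝ p1 p3
  by_cases hy : y = 0
  · subst hy
    simp only [zero_smul, add_zero] at hxy
    have h0 : p2 - p1 ≠ 0 := sub_ne_zero.mpr (Ne.symm h12)
    rcases smul_eq_zero.mp hxy with hx | hx
    · exact ⟨hx, rfl⟩
    · exact absurd hx h0
  · exfalso
    have h3 : p3 - p1 = (-(x/y)) • (p2 - p1) := by
      apply smul_right_injective _ hy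
      show y • (p3 - p1) = y • ((-(x/y)) • (p2 - p1))
      rw [smul_smul, show y * (-(x/y)) = -x by field_simp]
      linear_combination (norm := module) hxy
    have hmem : p3 ∈ line[ℝ, p1, p2] := by
      have heq : (-(x/y)) • (p2 -ᵥ p1) +ᵥ p1 = p3 := by
        simp only [vsub_eq_sub, vadd_eq_add]
        linear_combination (norm := module) -h3
      rw [← heq]
      exact smul_vsub_vadd_mem_affineSpan_pair _ _ _
    have hcol := collinear_insert_of_mem_affineSpan_pair hmem
    apply h
    have hset : ({p3, p1, p2} : Set Pt) = {p1, p2, p3} := by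
      ext z; constructor <;> intro hz <;> simp at hz ⊢ <;> tauto
    rw [← hset]; exact hcol

theorem stmt_7 (A B C G P D E F X A0 : Pt) (t : ℝ)
(hABC : AffineIndependent ℝ ![A, B, C])
    (hG : G = (1/3 : ℝ) • (A + B + C))
    (hPa : ¬ Collinear ℝ {B, C, P})
    (hPb : ¬ Collinear ℝ {C, A, P})
    (hPc : ¬ Collinear ℝ {A, B, P})
    (hD : Collinear ℝ {B, C, D}) (hDcev : Collinear ℝ {A, P, D})
    (hE : Collinear ℝ {C, A, E}) (hEcev : Collinear ℝ {B, P, E})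
    (hF : Collinear ℝ {A, B, F}) (hFcev : Collinear ℝ {C, P, F})
    (hD0 : D0 = midpoint ℝ B C) (hE0 : E0 = midpoint ℝ C A) (hF0 : F0 = midpoint ℝ A B)
    (ht : D = B + t • (C - B))
    (hX : X = F + t • (E - F))
    (hA0 : A0 = midpoint ℝ E F)
    (hXD : X ≠ D) (hA0A : A0 ≠ A) :
    line[ℝ, D, X] ∥ line[ℝ, A, A0] := by
  have hnc : ¬ Collinear ℝ {A, B, C} := affineIndependent_iff_not_collinear_set.mp hABC
  have hAB : A ≠ B := by simpa using hABC.injective.ne (show (0 : Fin 3) ≠ 1 by decide)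
  have hCA : C ≠ A := by simpa using hABC.injective.ne (show (2 : Fin 3) ≠ 0 by decide)
  have hAP : A ≠ P := by
    intro h; apply hPc; rw [← h]
    have hset : ({A, B, A} : Set Pt) = {A, B} := by
      ext z; constructor <;> intro hz <;> simp at hz ⊢ <;> tauto
    rw [hset]; exact collinear_pair ℝ A B
  have hBP : B ≠ P := by
    intro h; apply hPa; rw [← h]
    have hset : ({B, C, B} : Set Pt) = {B, C} := by
      ext z; constructor <;> intro hz <;> simp at hz ⊢ <;> tauto
    rw [hset]; exact collinear_pair ℝ B C
  have hCP : C ≠ P := by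
    intro h; apply hPb; rw [← h]
    have hset : ({C, A, C} : Set Pt) = {C, A} := by
      ext z; constructor <;> intro hz <;> simp at hz ⊢ <;> tauto
    rw [hset]; exact collinear_pair ℝ C A
  -- decompose P
  have hli : LinearIndependent ℝ ![B - A, C - A] :=
    LinearIndependent.pair_iff.mpr (fun x y hxy => aux_indep hnc x y hxy)
  have htop := hli.span_eq_top_of_card_eq_finrank (by simp)
  have hPmem : P - A ∈ Submodule.span ℝ ({B - A, C - A} : Set Pt) := by
    have hr : Set.range ![B - A, C - A] = {B - A, C - A} := by
      ext z
      simp only [Set.mem_range, Fin.exists_fin_two, Matrix.cons_val_zero, Matrix.cons_val_one,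
        Matrix.head_cons, Set.mem_insert_iff, Set.mem_singleton_iff, eq_comm]
    rw [← hr, htop]
    trivial
  obtain ⟨b, c, hP⟩ := Submodule.mem_span_pair.mp hPmem
  -- trace points
  obtain ⟨s, hsD⟩ := aux_col_ex hDcev hAP
  obtain ⟨v, hEC⟩ := aux_col_ex hE hCA
  obtain ⟨u, hEB⟩ := aux_col_ex hEcev hBP
  obtain ⟨w, hFA⟩ := aux_col_ex hF hAB
  obtain ⟨r, hFC⟩ := aux_col_ex hFcev hCP
  -- scalar relations
  obtain ⟨hs1, hs2⟩ := aux_indep hnc (s*b - (1-t)) (s*c - t)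
    (by linear_combination (norm := module) s • hP - hsD + ht)
  obtain ⟨hu1, hu2⟩ := aux_indep hnc (u*b - u + 1) (u*c - (1-v))
    (by linear_combination (norm := module) u • hP - hEB + hEC)
  obtain ⟨hw1, hw2⟩ := aux_indep hnc (w - r*b) (r - r*c - 1)
    (by linear_combination (norm := module) - hFA + hFC - r • hP)
  -- vector expressions
  have hEA : E - A = (1-v) • (C - A) := by
    linear_combination (norm := module) hEC
  have hA0' : A0 = (2⁻¹ : ℝ) • (E + F) := by
    rw [hA0, midpoint_eq_smul_add, invOf_eq_inv]
  have hXDv : X - D = ((1-t)*w - (1-t)) • (B - A) + (t*(1-v) - t) • (C - A) := by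
    rw [hX, ht]
    linear_combination (norm := module) (1-t) • hFA + t • hEA
  have hA0Av : A0 - A = (2⁻¹*w) • (B - A) + (2⁻¹*(1-v)) • (C - A) := by
    rw [hA0']
    linear_combination (norm := module) (2⁻¹ : ℝ) • hFA + (2⁻¹ : ℝ) • hEA
  have G1 : (1-t)*w - (1-t) = (2*s*(b+c-1)) * (2⁻¹*w) := by
    linear_combination (-(w-1))*hs1 - s*(c-1)*hw1 + s*b*hw2
  have G2 : t*(1-v) - t = (2*s*(b+c-1)) * (2⁻¹*(1-v)) := by
    linear_combination v*hs2 - s*c*hu1 - s*(1-b)*hu2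
  have key : X - D = (2*s*(b+c-1)) • (A0 - A) := by
    linear_combination (norm := module) hXDv - (2*s*(b+c-1)) • hA0Av
      + G1 • (B - A) + G2 • (C - A)
  have hlam : (2*s*(b+c-1)) ≠ 0 := by
    intro h0
    apply hXD
    rw [h0, zero_smul] at key
    exact sub_eq_zero.mp key
  rw [AffineSubspace.affineSpan_pair_parallel_iff_vectorSpan_eq, vectorSpan_pair,
    vectorSpan_pair]
  have hv : (D -ᵥ X) = (2*s*(b+c-1)) • (A -ᵥ A0) := by
    simp only [vsub_eq_sub]
    linear_combination (norm := module) -key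
  rw [hv]
  exact Submodule.span_singleton_smul_eq (isUnit_iff_ne_zero.mpr hlam) _
end

section
/- (Ehrmann) The affine map T which takes triangle ABC to the cevian triangle DEF of P fixes the isotomcomplement of P: T(Q) = Q. -/
open EuclideanGeometry Affine

local notation "Pt" => EuclideanSpace ℝ (Fin 2)

private lemma coll3 {X Y Z : EuclideanSpace ℝ (Fin 2)}
    (h : Collinear ℝ ({X, Y, Z} : Set (EuclideanSpace ℝ (Fin 2)))) (hXY : X ≠ Y) :
    ∃ t : ℝ, Z - X = t • (Y - X) := by
  rw [collinear_iff_of_mem (Set.mem_insert X {Y, Z})] at h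
  obtain ⟨v, hv⟩ := h
  obtain ⟨rY, hrY⟩ := hv Y (by simp)
  obtain ⟨rZ, hrZ⟩ := hv Z (by simp)
  have hrY0 : rY ≠ 0 := by
    rintro rfl
    apply hXY
    simp [vadd_eq_add] at hrY
    exact hrY.symm
  refine ⟨rZ / rY, ?_⟩
  have h1 : Y - X = rY • v := by rw [hrY, vadd_eq_add]; abel
  have h2 : Z - X = rZ • v := by rw [hrZ, vadd_eq_add]; abel
  rw [h1, h2, smul_smul, div_mul_cancel₀ _ hrY0]

private lemma mkcoll (X Y Z : EuclideanSpace ℝ (Fin 2)) (r : ℝ)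
    (h : Z - X = r • (Y - X)) :
    Collinear ℝ ({X, Y, Z} : Set (EuclideanSpace ℝ (Fin 2))) := by
  rw [collinear_iff_of_mem (Set.mem_insert X {Y, Z})]
  refine ⟨Y - X, fun p hp => ?_⟩
  simp only [Set.mem_insert_iff, Set.mem_singleton_iff] at hp
  rcases hp with rfl | rfl | rfl
  · exact ⟨0, by simp⟩
  · exact ⟨1, by simp [vadd_eq_add]⟩
  · refine ⟨r, ?_⟩
    rw [vadd_eq_add, ← h]
    abel

set_option maxHeartbeats 1000000 in
theorem stmt_8 (A B C G P D E F D0 E0 F0 D3 E3 F3 P' Q : Pt) (T : Pt →ᵃ[ℝ] Pt)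
(hABC : AffineIndependent ℝ ![A, B, C])
    (hG : G = (1/3 : ℝ) • (A + B + C))
    (hPa : ¬ Collinear ℝ {B, C, P})
    (hPb : ¬ Collinear ℝ {C, A, P})
    (hPc : ¬ Collinear ℝ {A, B, P})
    (hD : Collinear ℝ {B, C, D}) (hDcev : Collinear ℝ {A, P, D})
    (hE : Collinear ℝ {C, A, E}) (hEcev : Collinear ℝ {B, P, E})
    (hF : Collinear ℝ {A, B, F}) (hFcev : Collinear ℝ {C, P, F})
    (hD0 : D0 = midpoint ℝ B C) (hE0 : E0 = midpoint ℝ C A) (hF0 : F0 = midpoint ℝ A B)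
(hD3 : D3 = Equiv.pointReflection D0 D)
    (hE3 : E3 = Equiv.pointReflection E0 E)
    (hF3 : F3 = Equiv.pointReflection F0 F)
(hP'a : Collinear ℝ {A, D3, P'})
    (hP'b : Collinear ℝ {B, E3, P'})
    (hP'c : Collinear ℝ {C, F3, P'})
    (hQ : Q = AffineMap.homothety G (-1/2 : ℝ) P')
    (hTA : T A = D) (hTB : T B = E) (hTC : T C = F) :
    T Q = Q := by
  have hnc : ¬ Collinear ℝ ({A, B, C} : Set Pt) :=
    affineIndependent_iff_not_collinear_set.mp hABC
  -- distinctness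
  have hAB : A ≠ B := by
    intro h; apply hnc; rw [h]
    exact Collinear.subset (by intro z hz; simp at hz ⊢; tauto) (collinear_pair ℝ B C)
  have hBC : B ≠ C := by
    intro h; apply hnc; rw [h]
    exact Collinear.subset (by intro z hz; simp at hz ⊢; tauto) (collinear_pair ℝ A C)
  have hCA : C ≠ A := by
    intro h; apply hnc; rw [h]
    exact Collinear.subset (by intro z hz; simp at hz ⊢; tauto) (collinear_pair ℝ A B)
  have hAP : A ≠ P := by
    intro h; apply hPc; rw [← h]
    exact Collinear.subset (by intro z hz; simp at hz ⊢; tauto) (collinear_pair ℝ A B)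
  have hBP : B ≠ P := by
    intro h; apply hPa; rw [← h]
    exact Collinear.subset (by intro z hz; simp at hz ⊢; tauto) (collinear_pair ℝ B C)
  have hCP : C ≠ P := by
    intro h; apply hPb; rw [← h]
    exact Collinear.subset (by intro z hz; simp at hz ⊢; tauto) (collinear_pair ℝ C A)
  -- linear independence of B-A, C-A
  have L1 : ∀ a b : ℝ, a • (B - A) + b • (C - A) = 0 → a = 0 ∧ b = 0 := by
    intro a b hab
    by_contra hcon
    apply hnc
    by_cases hb : b = 0
    · have ha : a ≠ 0 := by tauto
      have h0 : a • (B - A) = 0 := by rw [hb] at hab; simpa using hab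
      have hBA : B - A = 0 := by
        rcases smul_eq_zero.mp h0 with h | h
        · exact absurd h ha
        · exact h
      have hBA' : B = A := by
        have := sub_eq_zero.mp hBA; exact this
      rw [hBA']
      exact Collinear.subset (by intro z hz; simp at hz ⊢; tauto) (collinear_pair ℝ A C)
    · have h1 : b • (C - A) = (-a) • (B - A) := by
        linear_combination (norm := module) hab
      have h2 : C - A = (b⁻¹ * (-a)) • (B - A) := by
        rw [mul_smul]
        exact ((inv_smul_eq_iff₀ hb).mpr h1.symm).symm
      exact mkcoll A B C _ h2
  have L1' : ∀ a b a' b' : ℝ,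
      a • (B - A) + b • (C - A) = a' • (B - A) + b' • (C - A) → a = a' ∧ b = b' := by
    intro a b a' b' h
    obtain ⟨h1, h2⟩ := L1 (a - a') (b - b') (by linear_combination (norm := module) h)
    exact ⟨by linarith, by linarith⟩
  -- barycentric coordinates of P
  have hspan : affineSpan ℝ (Set.range ![A, B, C]) = ⊤ := by
    refine hABC.affineSpan_eq_top_iff_card_eq_finrank_add_one.mpr ?_
    simp [finrank_euclideanSpace_fin]
  obtain ⟨β, γ, hP⟩ : ∃ β γ : ℝ, P = (1 - β - γ) • A + β • B + γ • C := by
    obtain ⟨wts, hw1, hPw⟩ := eq_affineCombination_of_mem_affineSpan_of_fintype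
      (by rw [hspan]; exact AffineSubspace.mem_top ℝ _ P)
    refine ⟨wts 1, wts 2, ?_⟩
    rw [Finset.affineCombination_eq_linear_combination _ _ _ hw1] at hPw
    simp [Fin.sum_univ_three] at hPw hw1
    have h0 : wts 0 = 1 - wts 1 - wts 2 := by linarith
    rw [h0] at hPw
    exact hPw
  have hPA : P - A = β • (B - A) + γ • (C - A) := by
    rw [hP]; module
  -- nonzero barycentric coordinates
  have hα0 : (1 : ℝ) - β - γ ≠ 0 := by
    intro h
    exact hPa (mkcoll B C P γ (by linear_combination (norm := module) hP + h • (A - B)))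
  have hβ0 : β ≠ 0 := by
    intro h
    exact hPb (mkcoll C A P (1 - γ) (by linear_combination (norm := module) hP + h • (B - A)))
  have hγ0 : γ ≠ 0 := by
    intro h
    exact hPc (mkcoll A B P β (by linear_combination (norm := module) hP + h • (C - A)))
  -- D
  obtain ⟨t, ht⟩ := coll3 hD hBC
  obtain ⟨s, hs⟩ := coll3 hDcev hAP
  have hDA1 : D - A = (1 - t) • (B - A) + t • (C - A) := by
    linear_combination (norm := module) ht
  have hDA2 : D - A = (s * β) • (B - A) + (s * γ) • (C - A) := by
    linear_combination (norm := module) hs + s • hPA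
  obtain ⟨hd1, hd2⟩ := L1' _ _ _ _ (hDA1.symm.trans hDA2)
  have hsrel : s * (β + γ) = 1 := by linear_combination -hd1 - hd2
  -- E
  obtain ⟨t2, ht2⟩ := coll3 hE hCA
  obtain ⟨s2, hs2⟩ := coll3 hEcev hBP
  have hEA1 : E - A = (0 : ℝ) • (B - A) + (1 - t2) • (C - A) := by
    linear_combination (norm := module) ht2
  have hEA2 : E - A = (1 + s2 * (β - 1)) • (B - A) + (s2 * γ) • (C - A) := by
    linear_combination (norm := module) hs2 + s2 • hPA
  obtain ⟨he1, he2⟩ := L1' _ _ _ _ (hEA1.symm.trans hEA2)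
  have hs2rel : s2 * (1 - β) = 1 := by linear_combination he1
  have hEA : E - A = (s2 * γ) • (C - A) := by
    rw [hEA1, he2]; module
  -- F
  obtain ⟨t3, ht3⟩ := coll3 hF hAB
  obtain ⟨s3, hs3⟩ := coll3 hFcev hCP
  have hFA1 : F - A = t3 • (B - A) + (0 : ℝ) • (C - A) := by
    linear_combination (norm := module) ht3
  have hFA2 : F - A = (s3 * β) • (B - A) + (1 + s3 * (γ - 1)) • (C - A) := by
    linear_combination (norm := module) hs3 + s3 • hPA
  obtain ⟨hf1, hf2⟩ := L1' _ _ _ _ (hFA1.symm.trans hFA2)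
  have hs3rel : s3 * (1 - γ) = 1 := by linear_combination hf2
  have hFA : F - A = (s3 * β) • (B - A) := by
    rw [hFA1, hf1]; module
  -- D3 and F3
  have hD3v : D3 = B + C - D := by
    rw [hD3, hD0, Equiv.pointReflection_apply, midpoint_eq_smul_add, invOf_eq_inv]
    simp only [vsub_eq_sub, vadd_eq_add]
    module
  have hF3v : F3 = A + B - F := by
    rw [hF3, hF0, Equiv.pointReflection_apply, midpoint_eq_smul_add, invOf_eq_inv]
    simp only [vsub_eq_sub, vadd_eq_add]
    module
  have hc1 : 1 - s * β = s * γ := by linear_combination -hsrel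
  have hc2 : 1 - s * γ = s * β := by linear_combination -hsrel
  have hD3A : D3 - A = (s * γ) • (B - A) + (s * β) • (C - A) := by
    have h1 : D3 - A = (1 - s * β) • (B - A) + (1 - s * γ) • (C - A) := by
      rw [hD3v]; linear_combination (norm := module) -hDA2
    rw [h1, hc1, hc2]
  have hF3C : F3 - C = (1 - s3 * β) • (B - A) + (-1 : ℝ) • (C - A) := by
    rw [hF3v]; linear_combination (norm := module) -hFA
  have hs0 : s ≠ 0 := left_ne_zero_of_mul_eq_one hsrel
  have hAD3 : A ≠ D3 := by
    intro h
    have h0 : (s * γ) • (B - A) + (s * β) • (C - A) = 0 := by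
      rw [← hD3A, ← h]; simp
    obtain ⟨h1, _⟩ := L1 _ _ h0
    rcases mul_eq_zero.mp h1 with h | h
    · exact hs0 h
    · exact hγ0 h
  have hCF3 : C ≠ F3 := by
    intro h
    have h0 : (1 - s3 * β) • (B - A) + (-1 : ℝ) • (C - A) = 0 := by
      rw [← hF3C, ← h]; simp
    obtain ⟨_, h2⟩ := L1 _ _ h0
    norm_num at h2
  -- P'
  obtain ⟨u, hu⟩ := coll3 hP'a hAD3
  obtain ⟨v, hv⟩ := coll3 hP'c hCF3
  have hP1 : P' - A = (u * (s * γ)) • (B - A) + (u * (s * β)) • (C - A) := by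
    linear_combination (norm := module) hu + u • hD3A
  have hP2 : P' - A = (v * (1 - s3 * β)) • (B - A) + (1 - v) • (C - A) := by
    linear_combination (norm := module) hv + v • hF3C
  obtain ⟨hx, hy⟩ := L1' _ _ _ _ (hP1.symm.trans hP2)
  -- solve for u
  have h5 : (u * (s * γ)) * (1 - γ) = (1 - β - γ) * (1 - u * (s * β)) := by
    linear_combination (1 - γ) * hx - v * β * hs3rel + (1 - β - γ) * hy
  have hxσ : (u * (s * γ)) * ((1 - β - γ) * (β + γ) + β * γ) = (1 - β - γ) * γ := by
    linear_combination γ * h5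
  have hS0 : (1 - β - γ) * (β + γ) + β * γ ≠ 0 := by
    intro h
    rw [h, mul_zero] at hxσ
    rcases mul_eq_zero.mp hxσ.symm with h' | h'
    · exact hα0 h'
    · exact hγ0 h'
  have huS : u * ((1 - β - γ) * (β + γ) + β * γ) = (1 - β - γ) * (β + γ) := by
    apply mul_left_cancel₀ hγ0
    linear_combination (β + γ) * hxσ - u * γ * ((1 - β - γ) * (β + γ) + β * γ) * hsrel
  -- Q
  have hQA : Q - A = ((1 - u * (s * γ)) / 2) • (B - A) + ((1 - u * (s * β)) / 2) • (C - A) := by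
    rw [hQ, AffineMap.homothety_apply, vsub_eq_sub, vadd_eq_add, hG]
    linear_combination (norm := module) (-1/2 : ℝ) • hP1
  -- T
  have hlin : ∀ X Y : Pt, T X - T Y = T.linear (X - Y) := by
    intro X Y
    simpa [vsub_eq_sub] using (T.linearMap_vsub X Y).symm
  have hTQ : T Q - D = ((1 - u * (s * γ)) / 2) • (E - D) + ((1 - u * (s * β)) / 2) • (F - D) := by
    have h := hlin Q A
    rw [hTA, hQA, map_add, map_smul, map_smul, ← hlin B A, ← hlin C A, hTA, hTB, hTC] at h
    exact h
  -- substitute explicit values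
  have sval : s = (β + γ)⁻¹ := eq_inv_of_mul_eq_one_left hsrel
  have s2val : s2 = (1 - β)⁻¹ := eq_inv_of_mul_eq_one_left hs2rel
  have s3val : s3 = (1 - γ)⁻¹ := eq_inv_of_mul_eq_one_left hs3rel
  have hbc0 : β + γ ≠ 0 := right_ne_zero_of_mul_eq_one hsrel
  have h1β : (1 : ℝ) - β ≠ 0 := right_ne_zero_of_mul_eq_one hs2rel
  have h1γ : (1 : ℝ) - γ ≠ 0 := right_ne_zero_of_mul_eq_one hs3rel
  subst sval s2val s3val
  have huval : u = (1 - β - γ) * (β + γ) / ((1 - β - γ) * (β + γ) + β * γ) :=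
    (eq_div_iff hS0).mpr huS
  have hxval : u * ((β + γ)⁻¹ * γ) = (1 - β - γ) * γ / ((1 - β - γ) * (β + γ) + β * γ) := by
    rw [huval]; field_simp
  have hyval : u * ((β + γ)⁻¹ * β) = (1 - β - γ) * β / ((1 - β - γ) * (β + γ) + β * γ) := by
    rw [huval]; field_simp
  rw [hxval, hyval] at hQA hTQ
  -- final assembly
  have hDp : D = ((β + γ)⁻¹ * β) • (B - A) + ((β + γ)⁻¹ * γ) • (C - A) + A := by
    linear_combination (norm := module) hDA2
  have hEp : E = ((1 - β)⁻¹ * γ) • (C - A) + A := by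
    linear_combination (norm := module) hEA
  have hFp : F = ((1 - γ)⁻¹ * β) • (B - A) + A := by
    linear_combination (norm := module) hFA
  have hQp : Q = ((1 - (1 - β - γ) * γ / ((1 - β - γ) * (β + γ) + β * γ)) / 2) • (B - A)
      + ((1 - (1 - β - γ) * β / ((1 - β - γ) * (β + γ) + β * γ)) / 2) • (C - A) + A := by
    linear_combination (norm := module) hQA
  have hTQp : T Q = ((1 - (1 - β - γ) * γ / ((1 - β - γ) * (β + γ) + β * γ)) / 2) • (E - D)
      + ((1 - (1 - β - γ) * β / ((1 - β - γ) * (β + γ) + β * γ)) / 2) • (F - D) + D := by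
    linear_combination (norm := module) hTQ
  rw [hTQp, hDp, hEp, hFp]
  rw [hQp]
  clear * - hbc0 h1β h1γ hS0
  match_scalars
  · field_simp
    ring
  · field_simp
    ring
  · field_simp
    ring
end

section
/- Let G' be the centroid of D, E, F. Then Q is the image of T(P') under the homothety with center G' and ratio -1/2; that is, Q is the complement of T(P') with respect to the triangle DEF. -/
open EuclideanGeometry Affine

local notation "Pt" => EuclideanSpace ℝ (Fin 2)

lemma indep3 {A B C : Pt} (h : AffineIndependent ℝ ![A,B,C]) {a b c : ℝ}
    (h0 : a + b + c = 0) (hv : a•A + b•B + c•C = 0) : a = 0 ∧ b = 0 ∧ c = 0 := by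
  rw [affineIndependent_iff] at h
  have := h Finset.univ ![a,b,c]
    (by simp [Fin.sum_univ_three, h0])
    (by simpa [Fin.sum_univ_three] using hv)
  exact ⟨this 0 (by simp), this 1 (by simp), this 2 (by simp)⟩

lemma exists_coords {A B C : Pt} (h : AffineIndependent ℝ ![A,B,C]) (P : Pt) :
    ∃ x y z : ℝ, x + y + z = 1 ∧ P = x•A + y•B + z•C := by
  have hspan : affineSpan ℝ (Set.range ![A,B,C]) = ⊤ := by
    rw [h.affineSpan_eq_top_iff_card_eq_finrank_add_one]
    simp [finrank_euclideanSpace_fin]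
  obtain ⟨w, hw, hweq⟩ := eq_affineCombination_of_mem_affineSpan_of_fintype
    (p1 := P) (p := ![A,B,C]) (by rw [hspan]; trivial)
  refine ⟨w 0, w 1, w 2, by simpa [Fin.sum_univ_three] using hw, ?_⟩
  rw [hweq, Finset.affineCombination_eq_linear_combination _ _ _ hw]
  simp [Fin.sum_univ_three]

lemma collinear_param {X Y Z : Pt} (h : Collinear ℝ {X, Y, Z}) (hXY : X ≠ Y) :
    ∃ t : ℝ, Z = X + t • (Y - X) := by
  rw [collinear_iff_exists_forall_eq_smul_vadd] at h
  obtain ⟨p, v, hv⟩ := h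
  obtain ⟨a, ha⟩ := hv X (by simp)
  obtain ⟨b, hb⟩ := hv Y (by simp)
  obtain ⟨c, hc⟩ := hv Z (by simp)
  have hab : b - a ≠ 0 := by
    intro h'
    exact hXY (by rw [ha, hb, show b = a by linarith])
  refine ⟨(c - a)/(b - a), ?_⟩
  rw [ha, hb, hc]
  simp only [vadd_eq_add]
  match_scalars <;> field_simp <;> ring

lemma collinear_of_param {X Y Z : Pt} (t : ℝ) (h : Z = X + t • (Y - X)) :
    Collinear ℝ {X, Y, Z} := by
  rw [collinear_iff_exists_forall_eq_smul_vadd]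
  refine ⟨X, Y - X, ?_⟩
  intro p hp
  rcases hp with rfl | rfl | rfl
  · exact ⟨0, by simp⟩
  · exact ⟨1, by simp⟩
  · exact ⟨t, by rw [h]; simp [add_comm]⟩

lemma aff3 (T : Pt →ᵃ[ℝ] Pt) (p q r : ℝ) (h : p + q + r = 1) (A B C : Pt) :
    T (p•A + q•B + r•C) = p • T A + q • T B + r • T C := by
  have hp : p = 1 - q - r := by linarith
  have h1 : p•A + q•B + r•C = (q•(B - A) + r•(C - A)) +ᵥ A := by
    simp only [vadd_eq_add]; rw [hp]; module
  rw [h1, AffineMap.map_vadd, map_add, LinearMap.map_smul, LinearMap.map_smul]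
  have h2 : T.linear (B - A) = T B - T A := by
    rw [show B - A = B -ᵥ A from rfl, AffineMap.linearMap_vsub]; rfl
  have h3 : T.linear (C - A) = T C - T A := by
    rw [show C - A = C -ᵥ A from rfl, AffineMap.linearMap_vsub]; rfl
  rw [h2, h3]; simp only [vadd_eq_add]; rw [hp]; module

lemma point_reflect_midpoint (B C D X : Pt) (h : X = Equiv.pointReflection (midpoint ℝ B C) D) :
    X = B + C - D := by
  rw [h, Equiv.pointReflection_apply]
  have h2 : midpoint ℝ B C = (1/2 : ℝ) • B + (1/2 : ℝ) • C := by
    rw [midpoint_eq_smul_add, show (⅟2 : ℝ) = 1/2 by norm_num]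
    match_scalars <;> ring
  rw [h2]
  simp only [vsub_eq_sub, vadd_eq_add]
  match_scalars <;> ring


set_option maxHeartbeats 1000000 in
lemma coeffA (x y z : ℝ) (hyz : y+z ≠ 0) (hxz : x+z ≠ 0) (hxy : x+y ≠ 0)
    (hσ : x*y + y*z + x*z ≠ 0) :
    -1 / 2 * ((1 - x * (y + z) / (x * y + y * z + x * z)) * 1 - 1 / 3 * 1) + 1 / 3 * 1 =
    -1 / 2 *
        (x * (y + z) / (x * y + y * z + x * z) * (1 - (y + z)⁻¹ * y) * ((x + z)⁻¹ * x * 1) +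
            x * (y + z) / (x * y + y * z + x * z) * (1 - (y + z)⁻¹ * z) * ((x + y)⁻¹ * x * 1) -
          1 / 3 * ((x + z)⁻¹ * x * 1 + (x + y)⁻¹ * x * 1)) +
      1 / 3 * ((x + z)⁻¹ * x * 1 + (x + y)⁻¹ * x * 1) := by
  have e : x * (y + z) / (x * y + y * z + x * z) = x * (y + z) * (x * y + y * z + x * z)⁻¹ := div_eq_mul_inv _ _
  have hw : (x * y + y * z + x * z) * (x * y + y * z + x * z)⁻¹ = 1 := mul_inv_cancel₀ hσ
  rw [e]
  generalize (x * y + y * z + x * z)⁻¹ = w at *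
  field_simp
  linear_combination (3*x*(2*x+y+z)) * hw

set_option maxHeartbeats 1000000 in
lemma coeffB (x y z : ℝ) (hyz : y+z ≠ 0) (hxz : x+z ≠ 0) (hxy : x+y ≠ 0)
    (hσ : x*y + y*z + x*z ≠ 0) :
    -1 / 2 * (x * (y + z) / (x * y + y * z + x * z) * (1 - (y + z)⁻¹ * y) * 1 - 1 / 3 * 1) + 1 / 3 * 1 =
    -1 / 2 *
        ((1 - x * (y + z) / (x * y + y * z + x * z)) * ((y + z)⁻¹ * y * 1) +
            x * (y + z) / (x * y + y * z + x * z) * (1 - (y + z)⁻¹ * z) * ((x + y)⁻¹ * y * 1) -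
          1 / 3 * ((y + z)⁻¹ * y * 1 + (x + y)⁻¹ * y * 1)) +
      1 / 3 * ((y + z)⁻¹ * y * 1 + (x + y)⁻¹ * y * 1) := by
  have e : x * (y + z) / (x * y + y * z + x * z) = x * (y + z) * (x * y + y * z + x * z)⁻¹ := div_eq_mul_inv _ _
  have hw : (x * y + y * z + x * z) * (x * y + y * z + x * z)⁻¹ = 1 := mul_inv_cancel₀ hσ
  rw [e]
  generalize (x * y + y * z + x * z)⁻¹ = w at *
  field_simp
  linear_combination (-3*x*(y+z)) * hw

set_option maxHeartbeats 1000000 in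
lemma coeffC (x y z : ℝ) (hyz : y+z ≠ 0) (hxz : x+z ≠ 0) (hxy : x+y ≠ 0)
    (hσ : x*y + y*z + x*z ≠ 0) :
    -1 / 2 * (x * (y + z) / (x * y + y * z + x * z) * (1 - (y + z)⁻¹ * z) * 1 - 1 / 3 * 1) + 1 / 3 * 1 =
    -1 / 2 *
        ((1 - x * (y + z) / (x * y + y * z + x * z)) * ((y + z)⁻¹ * z * 1) +
            x * (y + z) / (x * y + y * z + x * z) * (1 - (y + z)⁻¹ * y) * ((x + z)⁻¹ * z * 1) -
          1 / 3 * ((y + z)⁻¹ * z * 1 + (x + z)⁻¹ * z * 1)) +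
      1 / 3 * ((y + z)⁻¹ * z * 1 + (x + z)⁻¹ * z * 1) := by
  have e : x * (y + z) / (x * y + y * z + x * z) = x * (y + z) * (x * y + y * z + x * z)⁻¹ := div_eq_mul_inv _ _
  have hw : (x * y + y * z + x * z) * (x * y + y * z + x * z)⁻¹ = 1 := mul_inv_cancel₀ hσ
  rw [e]
  generalize (x * y + y * z + x * z)⁻¹ = w at *
  field_simp
  linear_combination (-3*x*(y+z)) * hw

theorem stmt_9 (A B C G P D E F D0 E0 F0 D3 E3 F3 P' Q G' : Pt) (T : Pt →ᵃ[ℝ] Pt)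
(hABC : AffineIndependent ℝ ![A, B, C])
    (hG : G = (1/3 : ℝ) • (A + B + C))
    (hPa : ¬ Collinear ℝ {B, C, P})
    (hPb : ¬ Collinear ℝ {C, A, P})
    (hPc : ¬ Collinear ℝ {A, B, P})
    (hD : Collinear ℝ {B, C, D}) (hDcev : Collinear ℝ {A, P, D})
    (hE : Collinear ℝ {C, A, E}) (hEcev : Collinear ℝ {B, P, E})
    (hF : Collinear ℝ {A, B, F}) (hFcev : Collinear ℝ {C, P, F})
    (hD0 : D0 = midpoint ℝ B C) (hE0 : E0 = midpoint ℝ C A) (hF0 : F0 = midpoint ℝ A B)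
(hD3 : D3 = Equiv.pointReflection D0 D)
    (hE3 : E3 = Equiv.pointReflection E0 E)
    (hF3 : F3 = Equiv.pointReflection F0 F)
(hP'a : Collinear ℝ {A, D3, P'})
    (hP'b : Collinear ℝ {B, E3, P'})
    (hP'c : Collinear ℝ {C, F3, P'})
    (hQ : Q = AffineMap.homothety G (-1/2 : ℝ) P')
    (hTA : T A = D) (hTB : T B = E) (hTC : T C = F)
    (hG' : G' = (1/3 : ℝ) • (D + E + F)) :
    Q = AffineMap.homothety G' (-1/2 : ℝ) (T P') := by
  obtain ⟨x, y, z, hxyz, hP⟩ := exists_coords hABC P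
  have hne : ∀ i j : Fin 3, i ≠ j → ![A,B,C] i ≠ ![A,B,C] j := fun i j hij h' =>
    hij (hABC.injective h')
  have hAB : A ≠ B := by simpa using hne 0 1 (by decide)
  have hBC : B ≠ C := by simpa using hne 1 2 (by decide)
  have hCA : C ≠ A := by simpa using hne 2 0 (by decide)
  have hPA : A ≠ P := fun h =>
    hPc (by rw [← h]; exact collinear_of_param 0 (by simp))
  have hPB : B ≠ P := fun h =>
    hPa (by rw [← h]; exact collinear_of_param 0 (by simp))
  have hPC : C ≠ P := fun h =>
    hPa (by rw [← h]; exact collinear_of_param 1 (by simp))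
  have hx : x ≠ 0 := by
    intro h0
    have hy : y = 1 - z := by linarith
    exact hPa (collinear_of_param z (by rw [hP, h0, hy]; module))
  have hy : y ≠ 0 := by
    intro h0
    have hz : z = 1 - x := by linarith
    exact hPb (collinear_of_param x (by rw [hP, h0, hz]; module))
  have hz : z ≠ 0 := by
    intro h0
    have hy' : y = 1 - x := by linarith
    exact hPc (collinear_of_param y (by rw [hP, h0, hy']; module))
  -- cevian traces
  obtain ⟨t1, ht1⟩ := collinear_param hD hBC
  obtain ⟨sd, hsd⟩ := collinear_param hDcev hPA
  obtain ⟨t2, ht2⟩ := collinear_param hE hCA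
  obtain ⟨se, hse⟩ := collinear_param hEcev hPB
  obtain ⟨t3, ht3⟩ := collinear_param hF hAB
  obtain ⟨sf, hsf⟩ := collinear_param hFcev hPC
  -- D coefficients
  have hvD : (1 + sd*(x-1))•A + (sd*y - (1-t1))•B + (sd*z - t1)•C = 0 := by
    have h1 : A + sd•(x•A+y•B+z•C - A) = B + t1•(C-B) := by rw [← hP, ← hsd, ht1]
    linear_combination (norm := module) h1
  obtain ⟨eD, eD2, eD3⟩ := indep3 hABC (by linear_combination sd * hxyz) hvD
  have hsD : sd * (y + z) = 1 := by linear_combination -eD + sd*hxyz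
  have hyz : y + z ≠ 0 := fun h => by simp [h] at hsD
  have hD' : D = (sd*y)•B + (sd*z)•C := by
    rw [hsd, hP]
    match_scalars <;> first | ring1 | linear_combination eD | linear_combination -eD
  -- E coefficients
  have hvE : (se*x - t2)•A + (1 + se*(y-1))•B + (se*z - (1-t2))•C = 0 := by
    have h1 : B + se•(x•A+y•B+z•C - B) = C + t2•(A-C) := by rw [← hP, ← hse, ht2]
    linear_combination (norm := module) h1
  obtain ⟨eE1, eE, eE3⟩ := indep3 hABC (by linear_combination se * hxyz) hvE
  have hsE : se * (x + z) = 1 := by linear_combination -eE + se*hxyz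
  have hxz : x + z ≠ 0 := fun h => by simp [h] at hsE
  have hE' : E = (se*x)•A + (se*z)•C := by
    rw [hse, hP]
    match_scalars <;> first | ring1 | linear_combination eE | linear_combination -eE
  -- F coefficients
  have hvF : (sf*x - (1-t3))•A + (sf*y - t3)•B + (1 + sf*(z-1))•C = 0 := by
    have h1 : C + sf•(x•A+y•B+z•C - C) = A + t3•(B-A) := by rw [← hP, ← hsf, ht3]
    linear_combination (norm := module) h1
  obtain ⟨eF1, eF2, eF⟩ := indep3 hABC (by linear_combination sf * hxyz) hvF
  have hsF : sf * (x + y) = 1 := by linear_combination -eF + sf*hxyz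
  have hxy : x + y ≠ 0 := fun h => by simp [h] at hsF
  have hF' : F = (sf*x)•A + (sf*y)•B := by
    rw [hsf, hP]
    match_scalars <;> first | ring1 | linear_combination eF | linear_combination -eF
  -- reflections
  have hD3' : D3 = (1 - sd*y)•B + (1 - sd*z)•C := by
    rw [point_reflect_midpoint B C D D3 (hD0 ▸ hD3), hD']
    match_scalars <;> ring
  have hE3' : E3 = (1 - se*x)•A + (1 - se*z)•C := by
    rw [point_reflect_midpoint C A E E3 (hE0 ▸ hE3), hE']
    match_scalars <;> ring
  -- A ≠ D3, B ≠ E3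
  have hAD3 : A ≠ D3 := by
    intro h
    have hv : (1:ℝ)•A + (-(1 - sd*y))•B + (-(1 - sd*z))•C = 0 := by
      have h1 : A = (1 - sd*y)•B + (1 - sd*z)•C := h.trans hD3'
      linear_combination (norm := module) h1
    have := (indep3 hABC (by linear_combination hsD) hv).1
    norm_num at this
  have hBE3 : B ≠ E3 := by
    intro h
    have hv : (-(1 - se*x))•A + (1:ℝ)•B + (-(1 - se*z))•C = 0 := by
      have h1 : B = (1 - se*x)•A + (1 - se*z)•C := h.trans hE3'
      linear_combination (norm := module) h1
    have := (indep3 hABC (by linear_combination hsE) hv).2.1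
    norm_num at this
  -- isotomic conjugate coordinates
  obtain ⟨u, hu⟩ := collinear_param hP'a hAD3
  obtain ⟨v, hv⟩ := collinear_param hP'b hBE3
  have hvP : ((1-u) - v*(1-se*x))•A + (u*(1-sd*y) - (1-v))•B
      + (u*(1-sd*z) - v*(1-se*z))•C = 0 := by
    have h1 : A + u•((1 - sd*y)•B + (1 - sd*z)•C - A)
        = B + v•((1 - se*x)•A + (1 - se*z)•C - B) := by
      rw [← hD3', ← hE3', ← hu, hv]
    linear_combination (norm := module) h1
  obtain ⟨c1, c2, c3⟩ := indep3 hABC (by linear_combination (-u)*hsD + v*hsE) hvP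
  have c2' : u*sd*z - (1 - v) = 0 := by linear_combination c2 + u*hsD
  have c3' : u*sd*y - v*se*x = 0 := by linear_combination c3 + u*hsD - v*hsE
  have hkey : u * sd * (x*y + y*z + x*z) = x := by
    linear_combination (x+z)*c3' + x*c2' + v*x*hsE
  have hσ : x*y + y*z + x*z ≠ 0 := fun h => hx (by linear_combination u*sd*h - hkey)
  have hsd' : sd = (y+z)⁻¹ := by field_simp; linear_combination hsD
  have hse' : se = (x+z)⁻¹ := by field_simp; linear_combination hsE
  have hsf' : sf = (x+y)⁻¹ := by field_simp; linear_combination hsF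
  have hu' : u = x*(y+z)/(x*y + y*z + x*z) := by
    rw [eq_div_iff hσ]
    linear_combination (y+z)*hkey - u*(x*y + y*z + x*z)*hsD
  -- P' in coordinates, and T P'
  have hpqr : (1-u) + (u*(1-sd*y)) + (u*(1-sd*z)) = 1 := by linear_combination -u*hsD
  have hP'co : P' = (1-u)•A + (u*(1-sd*y))•B + (u*(1-sd*z))•C := by
    rw [hu, hD3']; module
  have hTP' : T P' = (1-u)•D + (u*(1-sd*y))•E + (u*(1-sd*z))•F := by
    rw [hP'co, aff3 T _ _ _ hpqr, hTA, hTB, hTC]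
  -- conclusion
  rw [hQ, AffineMap.homothety_apply, AffineMap.homothety_apply, hTP', hP'co,
    hG, hG', hD', hE', hF']
  simp only [vsub_eq_sub, vadd_eq_add]
  rw [hsd', hse', hsf', hu']
  match_scalars
  · exact coeffA x y z hyz hxz hxy hσ
  · exact coeffB x y z hyz hxz hxy hσ
  · exact coeffC x y z hyz hxz hxy hσ
end

section
/- Let e and f be real numbers with e ∉ {0,1}, f ∉ {0,1}, and set E = A + e·(C − A) and F = A + f·(B − A). If e + f ≠ 0, then the point A* = E + (e/(e+f))·(F − E) is collinear with A and G. (This expresses that the trace A* of the median AG on line EF divides EF in the signed ratio EA*/A*F = (AE/AF)·(AB/AC).) -/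
open EuclideanGeometry Affine

local notation "Pt" => EuclideanSpace ℝ (Fin 2)

theorem stmt_10 (A B C G E F Ast : Pt) (e f : ℝ)
    (hABC : AffineIndependent ℝ ![A, B, C])
    (hG : G = (1/3 : ℝ) • (A + B + C))
    (he0 : e ≠ 0) (he1 : e ≠ 1) (hf0 : f ≠ 0) (hf1 : f ≠ 1)
    (hE : E = A + e • (C - A)) (hF : F = A + f • (B - A))
    (hef : e + f ≠ 0)
    (hAst : Ast = E + (e / (e + f)) • (F - E)) :
    Collinear ℝ {A, G, Ast} := by
  rw [collinear_iff_of_mem (Set.mem_insert A _)]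
  refine ⟨G - A, fun p hp => ?_⟩
  simp only [Set.mem_insert_iff, Set.mem_singleton_iff] at hp
  rcases hp with rfl | rfl | rfl
  · exact ⟨0, by simp⟩
  · exact ⟨1, by simp⟩
  · refine ⟨3 * e * f / (e + f), ?_⟩
    subst hAst hE hF hG
    simp only [vadd_eq_add]
    match_scalars <;> (field_simp <;> ring)
end

section
/- (Collinearity Theorem) Let Q' = K(P); let D2 be a point on line BC with A, Q, D2 collinear, and D4 a point on line BC with A, Q', D4 collinear. Then the following collinearities hold: {A, Q', T(D)} is collinear, {A, P, T(D4)} is collinear, {A, Q, T(D0)} is collinear, and {A, G, T(D2)} is collinear. -/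
open EuclideanGeometry Affine

local notation "Pt" => EuclideanSpace ℝ (Fin 2)

private lemma coll_param {s : Set Pt} (h : Collinear ℝ s) {X Y Z : Pt} (hX : X ∈ s) (hY : Y ∈ s)
    (hZ : Z ∈ s) (hXY : X ≠ Y) : ∃ t : ℝ, Z - X = t • (Y - X) := by
  obtain ⟨w, hw⟩ := (collinear_iff_of_mem hX).1 h
  obtain ⟨rY, hrY⟩ := hw Y hY
  obtain ⟨rZ, hrZ⟩ := hw Z hZ
  have hrY0 : rY ≠ 0 := by rintro rfl; simp at hrY; exact hXY hrY.symm
  refine ⟨rZ / rY, ?_⟩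
  have h1 : Y - X = rY • w := by rw [hrY]; simp [vadd_eq_add]
  have h2 : Z - X = rZ • w := by rw [hrZ]; simp [vadd_eq_add]
  rw [h1, h2, smul_smul, div_mul_cancel₀ _ hrY0]

private lemma coll_of (X Y Z : Pt) (c : ℝ) (h : Z - X = c • (Y - X)) : Collinear ℝ {X, Y, Z} := by
  apply (collinear_iff_of_mem (Set.mem_insert X _)).2
  refine ⟨Y - X, ?_⟩
  rintro p (rfl | rfl | rfl)
  · exact ⟨0, by simp⟩
  · exact ⟨1, by simp [vadd_eq_add]⟩
  · exact ⟨c, by rw [← h]; simp [vadd_eq_add]⟩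

private lemma dep_coll {X Y Z : Pt} {a b : ℝ} (h : a • (Y - X) + b • (Z - X) = 0)
    (hab : a ≠ 0 ∨ b ≠ 0) : Collinear ℝ {X, Y, Z} := by
  rcases ne_or_eq b 0 with hb | rfl
  · apply coll_of X Y Z (-a/b)
    have : b • (Z - X) = (-a) • (Y - X) := by
      rw [neg_smul]; linear_combination (norm := module) h
    calc Z - X = b⁻¹ • (b • (Z - X)) := by rw [inv_smul_smul₀ hb]
      _ = b⁻¹ • ((-a) • (Y - X)) := by rw [this]
      _ = (-a/b) • (Y - X) := by rw [smul_smul, div_eq_inv_mul]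
  · have ha : a ≠ 0 := by rcases hab with h' | h'; exacts [h', absurd rfl h']
    have hYX : Y - X = 0 := by
      have := h; rw [zero_smul, add_zero] at this
      exact (smul_eq_zero.mp this).resolve_left ha
    have hY : Y = X := by rwa [sub_eq_zero] at hYX
    subst hY
    have : ({Y, Y, Z} : Set Pt) = {Y, Z} := by simp
    rw [this]
    exact collinear_pair ℝ Y Z

private lemma scale_div {W Y A : Pt} {d n : ℝ} (hd : d ≠ 0) (h : d • (W - A) = n • (Y - A)) :
    W - A = (n/d) • (Y - A) := by
  calc W - A = d⁻¹ • (d • (W - A)) := (inv_smul_smul₀ hd _).symm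
    _ = d⁻¹ • (n • (Y - A)) := by rw [h]
    _ = (n/d) • (Y - A) := by rw [smul_smul, div_eq_inv_mul]
set_option maxHeartbeats 2000000 in
theorem stmt_11 (A B C G P D E F D0 E0 F0 D3 E3 F3 P' Q Q' D2 D4 : Pt) (T : Pt →ᵃ[ℝ] Pt)
(hABC : AffineIndependent ℝ ![A, B, C])
    (hG : G = (1/3 : ℝ) • (A + B + C))
    (hPa : ¬ Collinear ℝ {B, C, P})
    (hPb : ¬ Collinear ℝ {C, A, P})
    (hPc : ¬ Collinear ℝ {A, B, P})
    (hD : Collinear ℝ {B, C, D}) (hDcev : Collinear ℝ {A, P, D})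
    (hE : Collinear ℝ {C, A, E}) (hEcev : Collinear ℝ {B, P, E})
    (hF : Collinear ℝ {A, B, F}) (hFcev : Collinear ℝ {C, P, F})
    (hD0 : D0 = midpoint ℝ B C) (hE0 : E0 = midpoint ℝ C A) (hF0 : F0 = midpoint ℝ A B)
(hD3 : D3 = Equiv.pointReflection D0 D)
    (hE3 : E3 = Equiv.pointReflection E0 E)
    (hF3 : F3 = Equiv.pointReflection F0 F)
(hP'a : Collinear ℝ {A, D3, P'})
    (hP'b : Collinear ℝ {B, E3, P'})
    (hP'c : Collinear ℝ {C, F3, P'})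
    (hQ : Q = AffineMap.homothety G (-1/2 : ℝ) P')
    (hTA : T A = D) (hTB : T B = E) (hTC : T C = F)
    (hQ' : Q' = AffineMap.homothety G (-1/2 : ℝ) P)
    (hD2 : Collinear ℝ {B, C, D2}) (hD2cev : Collinear ℝ {A, Q, D2})
    (hD4 : Collinear ℝ {B, C, D4}) (hD4cev : Collinear ℝ {A, Q', D4}) :
    Collinear ℝ {A, Q', T D} ∧ Collinear ℝ {A, P, T D4} ∧
      Collinear ℝ {A, Q, T D0} ∧ Collinear ℝ {A, G, T D2} := by
  have hnc : ¬ Collinear ℝ {A, B, C} := by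
    rw [← affineIndependent_iff_not_collinear_set]; exact hABC
  have hInd : ∀ a b : ℝ, a • (B - A) + b • (C - A) = 0 → a = 0 ∧ b = 0 := by
    intro a b h
    by_contra hc
    rw [not_and_or] at hc
    exact hnc (dep_coll h hc)
  have hBC : B ≠ C := by
    intro h
    have := (hInd 1 (-1) (by rw [h]; module)).1
    norm_num at this
  have hAC : A ≠ C := by
    intro h
    have := (hInd 0 1 (by rw [← h]; module)).2
    norm_num at this
  have hAB : A ≠ B := by
    intro h
    have := (hInd 1 0 (by rw [← h]; module)).1
    norm_num at this
  have hAP : A ≠ P := fun h => hPc (coll_of A B P 0 (by rw [← h]; simp))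
  have hBP : B ≠ P := fun h => hPc (coll_of A B P 1 (by rw [← h]; simp))
  have hCP : C ≠ P := fun h => hPa (coll_of B C P 1 (by rw [← h]; simp))
  -- D, P coordinates
  obtain ⟨t, ht⟩ := coll_param (X := B) (Y := C) (Z := D) hD (by simp) (by simp) (by simp) hBC
  have hDco : D = (1-t) • (B-A) + t • (C-A) + A := by linear_combination (norm := module) ht
  have hAD : A ≠ D := by
    intro h
    have key : (1-t) • (B - A) + t • (C - A) = 0 := by
      linear_combination (norm := module) hDco.symm.trans h.symm
    obtain ⟨h1, h2⟩ := hInd _ _ key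
    linarith
  obtain ⟨sP, hsP⟩ := coll_param (X := A) (Y := D) (Z := P) hDcev (by simp) (by simp) (by simp) hAD
  obtain ⟨y, hy⟩ : ∃ y : ℝ, y = sP * (1 - t) := ⟨_, rfl⟩
  obtain ⟨z, hz⟩ : ∃ z : ℝ, z = sP * t := ⟨_, rfl⟩
  have hPco : P = y • (B-A) + z • (C-A) + A := by
    rw [hy, hz]; linear_combination (norm := module) hsP + sP • hDco
  have hsP0 : sP ≠ 0 := by
    intro h0
    apply hAP
    have h1 : P - A = 0 := by rw [hsP, h0]; simp
    rw [sub_eq_zero] at h1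
    exact h1.symm
  have hsyz : y + z = sP := by rw [hy, hz]; ring
  have hs0 : y + z ≠ 0 := by rw [hsyz]; exact hsP0
  have hy0 : y ≠ 0 := by
    intro h0
    apply hPb
    apply coll_of C A P (1 - z)
    rw [h0] at hPco
    linear_combination (norm := module) hPco
  have hz0 : z ≠ 0 := by
    intro h0
    apply hPc
    apply coll_of A B P y
    rw [h0] at hPco
    linear_combination (norm := module) hPco
  have hx0 : 1 - y - z ≠ 0 := by
    intro h0
    apply hPa
    apply coll_of B C P z
    rw [show y = 1 - z by linarith] at hPco
    linear_combination (norm := module) hPco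
  have hDv : (y+z) • (D - A) = y • (B-A) + z • (C-A) := by
    rw [hsyz, ← hsP, hPco]
    module
  -- E
  obtain ⟨rE, hrE⟩ := coll_param (X := A) (Y := C) (Z := E) hE (by simp) (by simp) (by simp) hAC
  obtain ⟨kE, hkE⟩ := coll_param (X := B) (Y := P) (Z := E) hEcev (by simp) (by simp) (by simp) hBP
  have keyE : (kE*(y-1) + 1) • (B-A) + (kE*z - rE) • (C-A) = 0 := by
    rw [hPco] at hkE
    linear_combination (norm := module) hrE - hkE
  obtain ⟨keyE1, keyE2⟩ := hInd _ _ keyE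
  have h1y : 1 - y ≠ 0 := by
    intro h0
    rw [show y - 1 = 0 by linarith, mul_zero] at keyE1
    norm_num at keyE1
  have hEv : (1-y) • (E - A) = z • (C-A) := by
    rw [hrE, smul_smul, show (1-y)*rE = z from by linear_combination (-(1-y)) * keyE2 - z * keyE1]
  -- F
  obtain ⟨rF, hrF⟩ := coll_param (X := A) (Y := B) (Z := F) hF (by simp) (by simp) (by simp) hAB
  obtain ⟨kF, hkF⟩ := coll_param (X := C) (Y := P) (Z := F) hFcev (by simp) (by simp) (by simp) hCP
  have keyF : (kF*y - rF) • (B-A) + (kF*(z-1) + 1) • (C-A) = 0 := by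
    rw [hPco] at hkF
    linear_combination (norm := module) hrF - hkF
  obtain ⟨keyF1, keyF2⟩ := hInd _ _ keyF
  have h1z : 1 - z ≠ 0 := by
    intro h0
    rw [show z - 1 = 0 by linarith, mul_zero] at keyF2
    norm_num at keyF2
  have hFv : (1-z) • (F - A) = y • (B-A) := by
    rw [hrF, smul_smul, show (1-z)*rF = y from by linear_combination (-(1-z)) * keyF1 - y * keyF2]
  -- D3
  have h3 : D3 - A = (B - A) + (C - A) - (D - A) := by
    rw [hD3, hD0, Equiv.pointReflection_apply, midpoint_eq_smul_add, invOf_eq_inv]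
    simp only [vsub_eq_sub, vadd_eq_add]
    match_scalars <;> norm_num
  have hD3v : (y+z) • (D3 - A) = z • (B-A) + y • (C-A) := by
    linear_combination (norm := module) (y+z) • h3 - hDv
  have hAD3 : A ≠ D3 := by
    intro h0
    rw [← h0] at hD3v
    have key := hInd z y (by linear_combination (norm := module) -hD3v)
    exact hz0 key.1
  obtain ⟨aP, haP⟩ := coll_param (X := A) (Y := D3) (Z := P') hP'a (by simp) (by simp) (by simp) hAD3
  have hP'v0 : (y+z) • (P' - A) = (aP*z) • (B-A) + (aP*y) • (C-A) := by
    linear_combination (norm := module) (y+z) • haP + aP • hD3v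
  -- E3
  have h3e : E3 - A = (C - A) - (E - A) := by
    rw [hE3, hE0, Equiv.pointReflection_apply, midpoint_eq_smul_add, invOf_eq_inv]
    simp only [vsub_eq_sub, vadd_eq_add]
    match_scalars <;> norm_num
  have hE3v : (1-y) • (E3 - A) = (1-y-z) • (C - A) := by
    linear_combination (norm := module) (1-y) • h3e - hEv
  have hBE3 : B ≠ E3 := by
    intro h0
    rw [← h0] at hE3v
    have key := hInd (1-y) (-(1-y-z)) (by linear_combination (norm := module) hE3v)
    exact h1y key.1
  obtain ⟨mP, hmP⟩ := coll_param (X := B) (Y := E3) (Z := P') hP'b (by simp) (by simp) (by simp) hBE3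
  have keyP' : ((1-y)*aP*z - (1-y)*(y+z) + mP*(1-y)*(y+z)) • (B-A)
      + ((1-y)*aP*y - mP*(y+z)*(1-y-z)) • (C-A) = 0 := by
    linear_combination (norm := module) ((1-y)*(y+z)) • hmP - (1-y) • hP'v0 + (mP*(y+z)) • hE3v
  obtain ⟨kp1, kp2⟩ := hInd _ _ keyP'
  -- sigma
  have hσ' : (1-y)*(aP*(y*z + z*(1-y-z) + (1-y-z)*y) - (y+z)*(1-y-z)) = 0 := by
    linear_combination (1-y-z)*kp1 + (1-y)*kp2
  have hσ : aP*(y*z + z*(1-y-z) + (1-y-z)*y) = (y+z)*(1-y-z) := by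
    have h := (mul_eq_zero.mp hσ').resolve_left h1y
    linarith
  have hσ0 : y*z + z*(1-y-z) + (1-y-z)*y ≠ 0 := by
    intro h0
    rw [h0, mul_zero] at hσ
    exact (mul_ne_zero hs0 hx0) hσ.symm
  have hP'v : (y*z + z*(1-y-z) + (1-y-z)*y) • (P' - A)
      = ((1-y-z)*z) • (B-A) + ((1-y-z)*y) • (C-A) := by
    have h1 : (aP*(y*z + z*(1-y-z) + (1-y-z)*y)) • (D3 - A)
        = ((y+z)*(1-y-z)) • (D3 - A) := by rw [hσ]
    linear_combination (norm := module) (y*z + z*(1-y-z) + (1-y-z)*y) • haP + h1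
      + (1-y-z) • hD3v
  -- G, Q, Q', D0
  have hGv : (3:ℝ) • (G - A) = (B-A) + (C-A) := by rw [hG]; module
  have hQrel : (2:ℝ) • (Q - A) = (3:ℝ) • (G - A) - (P' - A) := by
    rw [hQ, AffineMap.homothety_apply]
    simp only [vsub_eq_sub, vadd_eq_add]
    module
  have hQv : (2*(y*z + z*(1-y-z) + (1-y-z)*y)) • (Q - A)
      = (y*(1-y)) • (B-A) + (z*(1-z)) • (C-A) := by
    linear_combination (norm := module) (y*z + z*(1-y-z) + (1-y-z)*y) • hQrel
      + (y*z + z*(1-y-z) + (1-y-z)*y) • hGv - hP'v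
  have h2σ0 : 2*(y*z + z*(1-y-z) + (1-y-z)*y) ≠ 0 := mul_ne_zero two_ne_zero hσ0
  have hAQ : A ≠ Q := by
    intro h0
    rw [← h0] at hQv
    have key := hInd (y*(1-y)) (z*(1-z)) (by linear_combination (norm := module) -hQv)
    rcases mul_eq_zero.mp key.1 with h | h
    · exact hy0 h
    · exact h1y h
  have hQ'rel : (2:ℝ) • (Q' - A) = (3:ℝ) • (G - A) - (P - A) := by
    rw [hQ', AffineMap.homothety_apply]
    simp only [vsub_eq_sub, vadd_eq_add]
    module
  have hQ'v : (2:ℝ) • (Q' - A) = (1-y) • (B-A) + (1-z) • (C-A) := by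
    linear_combination (norm := module) hQ'rel + hGv - hPco
  have hAQ' : A ≠ Q' := by
    intro h0
    rw [← h0] at hQ'v
    have key := hInd (1-y) (1-z) (by linear_combination (norm := module) -hQ'v)
    exact h1y key.1
  have hD0v : (2:ℝ) • (D0 - A) = (1:ℝ) • (B-A) + (1:ℝ) • (C-A) := by
    rw [hD0, midpoint_eq_smul_add, invOf_eq_inv]
    match_scalars <;> norm_num
  -- T
  have hu : T.linear (B - A) = E - D := by
    have := T.linearMap_vsub B A; simp only [vsub_eq_sub] at this; rw [this, hTA, hTB]
  have hv : T.linear (C - A) = F - D := by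
    have := T.linearMap_vsub C A; simp only [vsub_eq_sub] at this; rw [this, hTA, hTC]
  have hTs : ∀ (γ α β : ℝ) (X : Pt), γ • (X - A) = α • (B-A) + β • (C-A) →
      γ • (T X - D) = α • (E - D) + β • (F - D) := by
    intro γ α β X hX
    have h1 : T X - D = T.linear (X - A) := by
      have := T.linearMap_vsub X A; simp only [vsub_eq_sub] at this; rw [this, hTA]
    rw [h1, ← map_smul, hX, map_add, map_smul, map_smul, hu, hv]
  -- D2
  obtain ⟨t2, ht2⟩ := coll_param (X := B) (Y := C) (Z := D2) hD2 (by simp) (by simp) (by simp) hBC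
  have hD2co : D2 = (1-t2) • (B-A) + t2 • (C-A) + A := by linear_combination (norm := module) ht2
  obtain ⟨s2, hs2⟩ := coll_param (X := A) (Y := Q) (Z := D2) hD2cev (by simp) (by simp) (by simp) hAQ
  have keyD2 : ((2*(y*z + z*(1-y-z) + (1-y-z)*y))*(1-t2) - s2*(y*(1-y))) • (B-A)
      + ((2*(y*z + z*(1-y-z) + (1-y-z)*y))*t2 - s2*(z*(1-z))) • (C-A) = 0 := by
    linear_combination (norm := module) (2*(y*z + z*(1-y-z) + (1-y-z)*y)) • hs2 + s2 • hQv
      - (2*(y*z + z*(1-y-z) + (1-y-z)*y)) • hD2co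
  obtain ⟨k1, k2⟩ := hInd _ _ keyD2
  have hs2m : s2*(y*(1-y) + z*(1-z)) = 2*(y*z + z*(1-y-z) + (1-y-z)*y) := by
    linear_combination -k1 - k2
  have hmD0 : y*(1-y) + z*(1-z) ≠ 0 := by
    intro h0
    rw [h0, mul_zero] at hs2m
    exact h2σ0 hs2m.symm
  have hcm : (2*(y*z + z*(1-y-z) + (1-y-z)*y))*(t2*(y*(1-y) + z*(1-z)))
      = (2*(y*z + z*(1-y-z) + (1-y-z)*y))*(z*(1-z)) := by
    linear_combination (y*(1-y) + z*(1-z))*k2 + (z*(1-z))*hs2m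
  have ht2m : t2*(y*(1-y) + z*(1-z)) = z*(1-z) := mul_left_cancel₀ h2σ0 hcm
  have hD2v : (y*(1-y) + z*(1-z)) • (D2 - A) = (y*(1-y)) • (B-A) + (z*(1-z)) • (C-A) := by
    rw [hD2co]
    match_scalars
    · linear_combination -ht2m
    · ring
    · linear_combination ht2m
  -- D4
  obtain ⟨t4, ht4'⟩ := coll_param (X := B) (Y := C) (Z := D4) hD4 (by simp) (by simp) (by simp) hBC
  have hD4co : D4 = (1-t4) • (B-A) + t4 • (C-A) + A := by linear_combination (norm := module) ht4'
  obtain ⟨s4, hs4⟩ := coll_param (X := A) (Y := Q') (Z := D4) hD4cev (by simp) (by simp) (by simp) hAQ'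
  have keyD4 : (2*(1-t4) - s4*(1-y)) • (B-A) + (2*t4 - s4*(1-z)) • (C-A) = 0 := by
    linear_combination (norm := module) (2:ℝ) • hs4 + s4 • hQ'v - (2:ℝ) • hD4co
  obtain ⟨k41, k42⟩ := hInd _ _ keyD4
  have hs4n : s4*(2-y-z) = 2 := by linear_combination -k41 - k42
  have hn0 : 2-y-z ≠ 0 := by
    intro h0
    rw [h0, mul_zero] at hs4n
    norm_num at hs4n
  have hc4 : 2*(t4*(2-y-z)) = 2*(1-z) := by
    linear_combination (2-y-z)*k42 + (1-z)*hs4n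
  have ht4 : t4*(2-y-z) = 1-z := by linarith
  have hD4v : (2-y-z) • (D4 - A) = (1-y) • (B-A) + (1-z) • (C-A) := by
    rw [hD4co]
    match_scalars
    · linear_combination -ht4
    · ring
    · linear_combination ht4
  -- conclusions
  have hTD := hTs (y+z) y z D hDv
  have hTD4 := hTs (2-y-z) (1-y) (1-z) D4 hD4v
  have hTD0 := hTs 2 1 1 D0 hD0v
  have hTD2 := hTs (y*(1-y) + z*(1-z)) (y*(1-y)) (z*(1-z)) D2 hD2v
  refine ⟨?_, ?_, ?_, ?_⟩
  · have hg : ((y+z)*(1-y)*(1-z)) • (T D - A) = (2*(y*z)) • (Q' - A) := by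
      linear_combination (norm := module) ((1-y)*(1-z)) • hTD + (y*(1-z)) • hEv
        + (z*(1-y)) • hFv - (y*z) • hQ'v
    exact coll_of A Q' (T D) _
      (scale_div (mul_ne_zero (mul_ne_zero hs0 h1y) h1z) hg)
  · have hg : (2-y-z) • (T D4 - A) = (1:ℝ) • (P - A) := by
      linear_combination (norm := module) hTD4 + hEv + hFv - hPco
    exact coll_of A P (T D4) _ (scale_div hn0 hg)
  · have hg : (2*((1-y)*(1-z))) • (T D0 - A)
        = (2*(y*z + z*(1-y-z) + (1-y-z)*y)) • (Q - A) := by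
      linear_combination (norm := module) ((1-y)*(1-z)) • hTD0 + (1-z) • hEv
        + (1-y) • hFv - hQv
    exact coll_of A Q (T D0) _
      (scale_div (mul_ne_zero two_ne_zero (mul_ne_zero h1y h1z)) hg)
  · have hg : (y*(1-y) + z*(1-z)) • (T D2 - A) = (3*(y*z)) • (G - A) := by
      linear_combination (norm := module) hTD2 + y • hEv + z • hFv - (y*z) • hGv
    exact coll_of A G (T D2) _ (scale_div hmD0 hg)
end

section
/- (Homothety Theorem) There exists a real number c such that the linear part of the composite affine map T ∘ T' is c times the identity (so T ∘ T' is a homothety or a translation); moreover (T ∘ T')(K(P)) = P. Consequently, if P ≠ G and X is any fixed point of T ∘ T', then X lies on the line through P and K(P). -/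
open EuclideanGeometry Affine

local notation "Pt" => EuclideanSpace ℝ (Fin 2)
set_option maxHeartbeats 1000000 in
theorem stmt_13 (A B C G P D E F D0 E0 F0 D3 E3 F3 : Pt) (T T' : Pt →ᵃ[ℝ] Pt)
(hABC : AffineIndependent ℝ ![A, B, C])
    (hG : G = (1/3 : ℝ) • (A + B + C))
    (hPa : ¬ Collinear ℝ {B, C, P})
    (hPb : ¬ Collinear ℝ {C, A, P})
    (hPc : ¬ Collinear ℝ {A, B, P})
    (hD : Collinear ℝ {B, C, D}) (hDcev : Collinear ℝ {A, P, D})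
    (hE : Collinear ℝ {C, A, E}) (hEcev : Collinear ℝ {B, P, E})
    (hF : Collinear ℝ {A, B, F}) (hFcev : Collinear ℝ {C, P, F})
    (hD0 : D0 = midpoint ℝ B C) (hE0 : E0 = midpoint ℝ C A) (hF0 : F0 = midpoint ℝ A B)
(hD3 : D3 = Equiv.pointReflection D0 D)
    (hE3 : E3 = Equiv.pointReflection E0 E)
    (hF3 : F3 = Equiv.pointReflection F0 F)
    (hTA : T A = D) (hTB : T B = E) (hTC : T C = F)
    (hT'A : T' A = D3) (hT'B : T' B = E3) (hT'C : T' C = F3) :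
    (∃ c : ℝ, (T.comp T').linear = c • LinearMap.id) ∧
      (T.comp T') (AffineMap.homothety G (-1/2 : ℝ) P) = P ∧
      (P ≠ G → ∀ X : Pt, (T.comp T') X = X →
        Collinear ℝ {P, AffineMap.homothety G (-1/2 : ℝ) P, X}) := by
  set u : Pt := B - A with hu
  set v : Pt := C - A with hv
  have hB : B = u + A := by rw [hu]; abel
  have hC : C = v + A := by rw [hv]; abel
  have hcol : ¬ Collinear ℝ ({A, B, C} : Set Pt) :=
    affineIndependent_iff_not_collinear_set.mp hABC
  -- linear independence of u, v
  have hli : ∀ x y : ℝ, x • u + y • v = 0 → x = 0 ∧ y = 0 := by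
    intro x y h
    by_contra hxy
    apply hcol
    rw [collinear_iff_of_mem (Set.mem_insert A _)]
    rcases eq_or_ne x 0 with hx | hx
    · have hy : y ≠ 0 := fun hy => hxy ⟨hx, hy⟩
      have hv0 : v = 0 := by
        have h' : y • v = 0 := by rw [hx, zero_smul, zero_add] at h; exact h
        exact (smul_eq_zero.mp h').resolve_left hy
      refine ⟨u, fun p hp => ?_⟩
      simp only [Set.mem_insert_iff, Set.mem_singleton_iff] at hp
      rcases hp with rfl | rfl | rfl
      · exact ⟨0, by simp⟩
      · exact ⟨1, by rw [hB, vadd_eq_add, one_smul]⟩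
      · exact ⟨0, by simp [hC, hv0, vadd_eq_add]⟩
    · have hxy' : x * (-y/x) = -y := by field_simp
      have h2 : x • u = x • ((-y/x) • v) := by
        rw [smul_smul, hxy', neg_smul, eq_neg_iff_add_eq_zero]
        exact h
      have hu2 : u = (-y/x) • v := smul_right_injective Pt hx h2
      refine ⟨v, fun p hp => ?_⟩
      simp only [Set.mem_insert_iff, Set.mem_singleton_iff] at hp
      rcases hp with rfl | rfl | rfl
      · exact ⟨0, by simp⟩
      · exact ⟨-y/x, by rw [hB, hu2, vadd_eq_add]⟩
      · exact ⟨1, by rw [hC, vadd_eq_add, one_smul]⟩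
  have hune : u ≠ 0 := by
    intro h0
    exact one_ne_zero (hli 1 0 (by rw [h0]; module)).1
  have hvne : v ≠ 0 := by
    intro h0
    exact one_ne_zero (hli 0 1 (by rw [h0]; module)).2
  -- spanning
  have hli2 : LinearIndependent ℝ ![u, v] := by
    rw [linearIndependent_fin2]
    simp only [Matrix.cons_val_one, Matrix.head_cons, Matrix.cons_val_zero]
    refine ⟨hvne, fun a ha => ?_⟩
    exact one_ne_zero (hli 1 (-a) (by rw [← ha]; module)).1
  have hspan : ∀ w : Pt, ∃ x y : ℝ, w = x • u + y • v := by
    intro w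
    have htop : Submodule.span ℝ (Set.range ![u, v]) = ⊤ :=
      hli2.span_eq_top_of_card_eq_finrank (by simp)
    have hw : w ∈ Submodule.span ℝ (Set.range ![u, v]) := by rw [htop]; trivial
    rw [Submodule.mem_span_range_iff_exists_fun] at hw
    obtain ⟨co, hco⟩ := hw
    exact ⟨co 0, co 1, by rw [← hco]; simp [Fin.sum_univ_two]⟩
  -- coordinates of P
  obtain ⟨β, γ, hPuv⟩ := hspan (P - A)
  have hP : P = β • u + γ • v + A := by rw [← hPuv]; abel
  -- nonzero coordinates
  have hβ : β ≠ 0 := by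
    intro h0
    apply hPb
    rw [collinear_iff_of_mem (show A ∈ ({C, A, P} : Set Pt) by simp)]
    refine ⟨v, fun p hp => ?_⟩
    simp only [Set.mem_insert_iff, Set.mem_singleton_iff] at hp
    rcases hp with rfl | rfl | rfl
    · exact ⟨1, by rw [hC, vadd_eq_add, one_smul]⟩
    · exact ⟨0, by simp⟩
    · exact ⟨γ, by rw [hP, h0, vadd_eq_add]; module⟩
  have hγ : γ ≠ 0 := by
    intro h0
    apply hPc
    rw [collinear_iff_of_mem (Set.mem_insert A _)]
    refine ⟨u, fun p hp => ?_⟩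
    simp only [Set.mem_insert_iff, Set.mem_singleton_iff] at hp
    rcases hp with rfl | rfl | rfl
    · exact ⟨0, by simp⟩
    · exact ⟨1, by rw [hB, vadd_eq_add, one_smul]⟩
    · exact ⟨β, by rw [hP, h0, vadd_eq_add]; module⟩
  -- distinctness
  have hAB : A ≠ B := fun h => hune (by rw [hu, ← h, sub_self])
  have hCA : C ≠ A := fun h => hvne (by rw [hv, h, sub_self])
  have hBC : B ≠ C := by
    intro h
    have h0 : (1:ℝ) • u + (-1 : ℝ) • v = 0 := by rw [hu, hv, h]; module
    exact one_ne_zero (hli 1 (-1) h0).1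
  have hAP : A ≠ P := by
    intro h
    have hz := sub_eq_zero.mpr h
    rw [hP] at hz
    have h0 : β • u + γ • v = 0 := by
      have h0' : -(β • u + γ • v) = 0 := by rw [← hz]; module
      rw [← neg_eq_zero]; exact h0'
    exact hβ (hli β γ h0).1
  have hBP : B ≠ P := by
    intro h
    have hz := sub_eq_zero.mpr h
    rw [hP, hB] at hz
    have h0 : (1 - β) • u + (-γ) • v = 0 := by rw [← hz]; module
    exact hγ (neg_eq_zero.mp (hli _ _ h0).2)
  have hCP : C ≠ P := by
    intro h
    have hz := sub_eq_zero.mpr h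
    rw [hP, hC] at hz
    have h0 : (-β) • u + (1 - γ) • v = 0 := by rw [← hz]; module
    exact hβ (neg_eq_zero.mp (hli _ _ h0).1)
  -- line extraction
  have hline : ∀ Q R S : Pt, Q ≠ R → Collinear ℝ ({Q, R, S} : Set Pt) →
      ∃ t : ℝ, S = t • (R - Q) + Q := by
    intro Q R S hQR hcl
    rw [collinear_iff_of_mem (Set.mem_insert Q _)] at hcl
    obtain ⟨w, hw⟩ := hcl
    obtain ⟨r₁, hr₁⟩ := hw R (by simp)
    obtain ⟨r₂, hr₂⟩ := hw S (by simp)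
    have hr₁0 : r₁ ≠ 0 := by
      rintro rfl
      rw [zero_smul, zero_vadd] at hr₁
      exact hQR hr₁.symm
    have hRQ : R - Q = r₁ • w := by rw [hr₁, vadd_eq_add]; abel
    refine ⟨r₂ / r₁, ?_⟩
    rw [hr₂, vadd_eq_add, hRQ, smul_smul, div_mul_cancel₀ _ hr₁0]
  -- the cevian points
  obtain ⟨t₁, hDt⟩ := hline B C D hBC hD
  obtain ⟨s₁, hDs⟩ := hline A P D hAP hDcev
  obtain ⟨t₂, hEt⟩ := hline C A E hCA hE
  obtain ⟨s₂, hEs⟩ := hline B P E hBP hEcev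
  obtain ⟨t₃, hFt⟩ := hline A B F hAB hF
  obtain ⟨s₃, hFs⟩ := hline C P F hCP hFcev
  -- D
  have hzD := sub_eq_zero.mpr (hDs.symm.trans hDt)
  rw [hP, hB, hC] at hzD
  have hkD : (s₁ * β - (1 - t₁)) • u + (s₁ * γ - t₁) • v = 0 := by rw [← hzD]; module
  have h1D := (hli _ _ hkD).1
  have h2D := (hli _ _ hkD).2
  have hsD : s₁ * (β + γ) = 1 := by linear_combination h1D + h2D
  have hbg : β + γ ≠ 0 := by
    intro h0
    rw [h0, mul_zero] at hsD
    exact zero_ne_one hsD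
  have hDc : D = (s₁*β) • u + (s₁*γ) • v + A := by
    rw [hDs, hP]; module
  -- E
  have hzE := sub_eq_zero.mpr (hEs.symm.trans hEt)
  rw [hP, hB, hC] at hzE
  have hkE : (1 + s₂ * (β - 1)) • u + (s₂ * γ - (1 - t₂)) • v = 0 := by rw [← hzE]; module
  have h1E := (hli _ _ hkE).1
  have hsE : s₂ * (1 - β) = 1 := by linear_combination -h1E
  have hb1 : (1:ℝ) - β ≠ 0 := by
    intro h0
    rw [h0, mul_zero] at hsE
    exact zero_ne_one hsE
  have hEc : E = (0:ℝ) • u + (s₂*γ) • v + A := by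
    rw [hEs, hP, hB]
    match_scalars
    · linear_combination (-1) * hsE
    · linear_combination (1) * hsE
    · ring1
  -- F
  have hzF := sub_eq_zero.mpr (hFs.symm.trans hFt)
  rw [hP, hB, hC] at hzF
  have hkF : (s₃ * β - t₃) • u + (s₃ * (γ - 1) + 1) • v = 0 := by rw [← hzF]; module
  have h2F := (hli _ _ hkF).2
  have hsF : s₃ * (1 - γ) = 1 := by linear_combination -h2F
  have hg1 : (1:ℝ) - γ ≠ 0 := by
    intro h0
    rw [h0, mul_zero] at hsF
    exact zero_ne_one hsF
  have hFc : F = (s₃*β) • u + (0:ℝ) • v + A := by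
    rw [hFs, hP, hC]
    match_scalars
    · ring1
    · linear_combination (1) * hsF
    · linear_combination (-1) * hsF
  -- midpoints and reflections
  have hmid : ∀ x y : Pt, midpoint ℝ x y = (2⁻¹:ℝ) • (x + y) := fun x y => by
    rw [midpoint_eq_smul_add, invOf_eq_inv]
  have hD3c : D3 = (s₁*γ) • u + (s₁*β) • v + A := by
    rw [hD3, Equiv.pointReflection_apply, hD0, hmid, vsub_eq_sub, vadd_eq_add, hDc, hB, hC]
    match_scalars
    · linear_combination (-1) * hsD
    · linear_combination (2) * hsD
    · linear_combination (-1) * hsD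
  have hE3c : E3 = (0:ℝ) • u + (s₂*(1-β-γ)) • v + A := by
    rw [hE3, Equiv.pointReflection_apply, hE0, hmid, vsub_eq_sub, vadd_eq_add, hEc, hC]
    match_scalars
    · linear_combination (-1) * hsE
    · linear_combination (1) * hsE
    · ring1
  have hF3c : F3 = (s₃*(1-β-γ)) • u + (0:ℝ) • v + A := by
    rw [hF3, Equiv.pointReflection_apply, hF0, hmid, vsub_eq_sub, vadd_eq_add, hFc, hB]
    match_scalars
    · linear_combination (1) * hsF
    · linear_combination (-1) * hsF
    · ring1
  -- affine maps on coordinates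
  have haff : ∀ (S : Pt →ᵃ[ℝ] Pt) (x y : ℝ),
      S (x • u + y • v + A) = x • (S B - S A) + y • (S C - S A) + S A := by
    intro S x y
    have h0 : S (x • u + y • v + A) = S.linear (x • u + y • v) + S A := by
      have h := S.map_vadd A (x • u + y • v)
      rw [vadd_eq_add, vadd_eq_add] at h
      exact h
    have h1 : S.linear u = S B - S A := by
      have h := S.map_vadd A u
      rw [vadd_eq_add, vadd_eq_add, ← hB] at h
      rw [h]; abel
    have h2 : S.linear v = S C - S A := by
      have h := S.map_vadd A v
      rw [vadd_eq_add, vadd_eq_add, ← hC] at h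
      rw [h]; abel
    rw [h0, map_add, map_smul, map_smul, h1, h2]
  have hc1 : T D3 = (s₁*γ) • (E - D) + (s₁*β) • (F - D) + D := by
    rw [hD3c, haff T, hTA, hTB, hTC]
  have hc2 : T E3 = (0:ℝ) • (E - D) + (s₂*(1-β-γ)) • (F - D) + D := by
    rw [hE3c, haff T, hTA, hTB, hTC]
  have hc3 : T F3 = (s₃*(1-β-γ)) • (E - D) + (0:ℝ) • (F - D) + D := by
    rw [hF3c, haff T, hTA, hTB, hTC]
  -- nonzero multipliers
  have hm2 : (β+γ)*((1-β)*(1-γ)) ≠ 0 := mul_ne_zero hbg (mul_ne_zero hb1 hg1)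
  have hm : (β+γ)^2*((1-β)*(1-γ)) ≠ 0 := mul_ne_zero (pow_ne_zero 2 hbg) (mul_ne_zero hb1 hg1)
  -- the linear part
  have hMB : (T.comp T') B = (T.comp T').linear u + (T.comp T') A := by
    have h := (T.comp T').map_vadd A u
    rw [vadd_eq_add, vadd_eq_add, ← hB] at h
    exact h
  have hMC : (T.comp T') C = (T.comp T').linear v + (T.comp T') A := by
    have h := (T.comp T').map_vadd A v
    rw [vadd_eq_add, vadd_eq_add, ← hC] at h
    exact h
  have hlu : (T.comp T').linear u = T E3 - T D3 := by
    have h := hMB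
    simp only [AffineMap.comp_apply, hT'A, hT'B] at h
    rw [h]; abel
  have hlv : (T.comp T').linear v = T F3 - T D3 := by
    have h := hMC
    simp only [AffineMap.comp_apply, hT'A, hT'C] at h
    rw [h]; abel
  have hlinu' : ((β+γ)^2*((1-β)*(1-γ))) • (T.comp T').linear u
      = ((β+γ)^2*((1-β)*(1-γ))) • ((2*(1-β-γ)*β*γ*(s₁*(s₂*s₃))) • u) := by
    rw [hlu, hc2, hc1, hDc, hEc, hFc]
    match_scalars
    · linear_combination (β*γ + -1*β*γ*s₂ + -1*β*γ*γ + 2*β*γ*γ*s₂ + -2*β*γ*γ*s₂*s₃ + β*γ*γ*s₁ + -1*β*γ*γ*γ*s₂ + 4*β*γ*γ*γ*s₂*s₃ + -1*β*γ*γ*γ*s₁ + -2*β*γ*γ*γ*γ*s₂*s₃ + β*β + -1*β*β*s₂ + -2*β*β*γ + -1*β*β*γ*s₃ + 4*β*β*γ*s₂ + -2*β*β*γ*s₂*s₃ + 2*β*β*γ*s₁ + β*β*γ*γ + β*β*γ*γ*s₃ + -4*β*β*γ*γ*s₂ + 8*β*β*γ*γ*s₂*s₃ + -3*β*β*γ*γ*s₁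 + β*β*γ*γ*γ*s₂ + -8*β*β*γ*γ*γ*s₂*s₃ + β*β*γ*γ*γ*s₁ + 2*β*β*γ*γ*γ*γ*s₂*s₃ + -1*β*β*β + -1*β*β*β*s₃ + 2*β*β*β*s₂ + β*β*β*s₁ + β*β*β*γ + 2*β*β*β*γ*s₃ + -4*β*β*β*γ*s₂ + 4*β*β*β*γ*s₂*s₃ + -3*β*β*β*γ*s₁ + -1*β*β*β*γ*γ*s₃ + 2*β*β*β*γ*γ*s₂ + -8*β*β*β*γ*γ*s₂*s₃ + 2*β*β*β*γ*γ*s₁ + 4*β*β*β*γ*γ*γ*s₂*s₃ + β*β*β*β*s₃ + -1*β*β*β*β*s₂ + -1*β*β*β*β*s₁ + -1*β*β*β*β*γ*s₃ + β*β*β*β*γ*s₂ + -2*β*β*β*β*γ*s₂*s₃ + β*β*β*β*γ*s₁ + 2*β*β*β*β*γ*γ*s₂*s₃) * hsD + (-1*β*γ + 2*β*γ*γ + -1*β*γ*γ*s₃ + -1*β*γ*γ*γ + 2*β*γ*γ*γ*s₃ + -1*β*γ*γ*γ*γ*s₃ + -1*β*β + 3*β*β*γ + -2*β*β*γ*γ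 + β*β*γ*γ*s₃ + -1*β*β*γ*γ*γ*s₃ + β*β*β + β*β*β*s₃ + -1*β*β*β*γ + -2*β*β*β*γ*s₃ + β*β*β*γ*γ*s₃ + -1*β*β*β*β*s₃ + β*β*β*β*γ*s₃) * hsE + (-1*β*γ*γ + β*γ*γ*γ + -1*β*β*γ + β*β*γ*γ) * hsF
    · linear_combination (-1*γ*γ + γ*γ*s₂ + γ*γ*γ + -1*γ*γ*γ*s₂ + -1*γ*γ*γ*s₁ + γ*γ*γ*γ*s₁ + -2*β*γ + 2*β*γ*s₂ + 3*β*γ*γ + -5*β*γ*γ*s₂ + 2*β*γ*γ*s₂*s₃ + -3*β*γ*γ*s₁ + -1*β*γ*γ*γ + 3*β*γ*γ*γ*s₂ + -4*β*γ*γ*γ*s₂*s₃ + 4*β*γ*γ*γ*s₁ + 2*β*γ*γ*γ*γ*s₂*s₃ + -1*β*γ*γ*γ*γ*s₁ + -1*β*β + β*β*s₂ + 3*β*β*γ + β*β*γ*s₃ + -6*β*β*γ*s₂ + 2*β*β*γ*s₂*s₃ + -3*β*β*γ*s₁ + -2*β*β*γ*γ + -1*β*β*γ*γ*s₃ + 7*β*β*γ*γ*s₂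 + -8*β*β*γ*γ*s₂*s₃ + 6*β*β*γ*γ*s₁ + -2*β*β*γ*γ*γ*s₂ + 8*β*β*γ*γ*γ*s₂*s₃ + -3*β*β*γ*γ*γ*s₁ + -2*β*β*γ*γ*γ*γ*s₂*s₃ + β*β*β + β*β*β*s₃ + -2*β*β*β*s₂ + -1*β*β*β*s₁ + -1*β*β*β*γ + -2*β*β*β*γ*s₃ + 5*β*β*β*γ*s₂ + -4*β*β*β*γ*s₂*s₃ + 4*β*β*β*γ*s₁ + β*β*β*γ*γ*s₃ + -3*β*β*β*γ*γ*s₂ + 8*β*β*β*γ*γ*s₂*s₃ + -3*β*β*β*γ*γ*s₁ + -4*β*β*β*γ*γ*γ*s₂*s₃ + -1*β*β*β*β*s₃ + β*β*β*β*s₂ + β*β*β*β*s₁ + β*β*β*β*γ*s₃ + -1*β*β*β*β*γ*s₂ + 2*β*β*β*β*γ*s₂*s₃ + -1*β*β*β*β*γ*s₁ + -2*β*β*β*β*γ*γ*s₂*s₃) * hsD + (γ*γ + -1*γ*γ*γ + 2*β*γ + -4*β*γ*γ + β*γ*γ*s₃ + 2*β*γ*γ*γ + -2*β*γ*γ*γ*s₃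 + β*γ*γ*γ*γ*s₃ + β*β + -4*β*β*γ + 3*β*β*γ*γ + -1*β*β*γ*γ*s₃ + β*β*γ*γ*γ*s₃ + -1*β*β*β + -1*β*β*β*s₃ + β*β*β*γ + 2*β*β*β*γ*s₃ + -1*β*β*β*γ*γ*s₃ + β*β*β*β*s₃ + -1*β*β*β*β*γ*s₃) * hsE + (β*γ*γ + -1*β*γ*γ*γ + β*β*γ + -1*β*β*γ*γ) * hsF
    · linear_combination (γ*γ + -1*γ*γ*s₂ + -1*γ*γ*γ + γ*γ*γ*s₂ + γ*γ*γ*s₁ + -1*γ*γ*γ*γ*s₁ + β*γ + -1*β*γ*s₂ + -2*β*γ*γ + 3*β*γ*γ*s₂ + 2*β*γ*γ*s₁ + β*γ*γ*γ + -2*β*γ*γ*γ*s₂ + -3*β*γ*γ*γ*s₁ + β*γ*γ*γ*γ*s₁ + -1*β*β*γ + 2*β*β*γ*s₂ + β*β*γ*s₁ + β*β*γ*γ + -3*β*β*γ*γ*s₂ + -3*β*β*γ*γ*s₁ + β*β*γ*γ*γ*s₂ + 2*β*β*γ*γ*γ*s₁ + -1*β*β*β*γ*s₂ + -1*β*β*β*γ*s₁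 + β*β*β*γ*γ*s₂ + β*β*β*γ*γ*s₁) * hsD + (-1*γ*γ + γ*γ*γ + -1*β*γ + 2*β*γ*γ + -1*β*γ*γ*γ + β*β*γ + -1*β*β*γ*γ) * hsE
  have hlinv' : ((β+γ)^2*((1-β)*(1-γ))) • (T.comp T').linear v
      = ((β+γ)^2*((1-β)*(1-γ))) • ((2*(1-β-γ)*β*γ*(s₁*(s₂*s₃))) • v) := by
    rw [hlv, hc3, hc1, hDc, hEc, hFc]
    match_scalars
    · linear_combination (β*γ + -1*β*γ*s₃ + -1*β*γ*γ + 2*β*γ*γ*s₃ + β*γ*γ*s₁ + -1*β*γ*γ*γ*s₃ + -1*β*γ*γ*γ*s₁ + β*β + -1*β*β*s₃ + -2*β*β*γ + 3*β*β*γ*s₃ + 2*β*β*γ*s₁ + β*β*γ*γ + -3*β*β*γ*γ*s₃ + -3*β*β*γ*γ*s₁ + β*β*γ*γ*γ*s₃ + β*β*γ*γ*γ*s₁ + -1*β*β*β + β*β*β*s₃ + β*β*β*s₁ + β*β*β*γ + -2*β*β*β*γ*s₃ + -3*β*β*β*γ*s₁ + β*β*β*γ*γ*s₃ + 2*β*β*β*γ*γ*s₁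 + -1*β*β*β*β*s₁ + β*β*β*β*γ*s₁) * hsD + (-1*β*γ + β*γ*γ + -1*β*β + 2*β*β*γ + -1*β*β*γ*γ + β*β*β + -1*β*β*β*γ) * hsF
    · linear_combination (-1*γ*γ + γ*γ*s₃ + γ*γ*γ + -2*γ*γ*γ*s₃ + γ*γ*γ*s₂ + -1*γ*γ*γ*s₁ + γ*γ*γ*γ*s₃ + -1*γ*γ*γ*γ*s₂ + γ*γ*γ*γ*s₁ + -2*β*γ + 2*β*γ*s₃ + 3*β*γ*γ + -6*β*γ*γ*s₃ + β*γ*γ*s₂ + 2*β*γ*γ*s₂*s₃ + -3*β*γ*γ*s₁ + -1*β*γ*γ*γ + 5*β*γ*γ*γ*s₃ + -2*β*γ*γ*γ*s₂ + -4*β*γ*γ*γ*s₂*s₃ + 4*β*γ*γ*γ*s₁ + -1*β*γ*γ*γ*γ*s₃ + β*γ*γ*γ*γ*s₂ + 2*β*γ*γ*γ*γ*s₂*s₃ + -1*β*γ*γ*γ*γ*s₁ + -1*β*β + β*β*s₃ + 3*β*β*γ + -5*β*β*γ*s₃ + 2*β*β*γ*s₂*s₃ + -3*β*β*γ*s₁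 + -2*β*β*γ*γ + 7*β*β*γ*γ*s₃ + -1*β*β*γ*γ*s₂ + -8*β*β*γ*γ*s₂*s₃ + 6*β*β*γ*γ*s₁ + -3*β*β*γ*γ*γ*s₃ + β*β*γ*γ*γ*s₂ + 8*β*β*γ*γ*γ*s₂*s₃ + -3*β*β*γ*γ*γ*s₁ + -2*β*β*γ*γ*γ*γ*s₂*s₃ + β*β*β + -1*β*β*β*s₃ + -1*β*β*β*s₁ + -1*β*β*β*γ + 3*β*β*β*γ*s₃ + -4*β*β*β*γ*s₂*s₃ + 4*β*β*β*γ*s₁ + -2*β*β*β*γ*γ*s₃ + 8*β*β*β*γ*γ*s₂*s₃ + -3*β*β*β*γ*γ*s₁ + -4*β*β*β*γ*γ*γ*s₂*s₃ + β*β*β*β*s₁ + 2*β*β*β*β*γ*s₂*s₃ + -1*β*β*β*β*γ*s₁ + -2*β*β*β*β*γ*γ*s₂*s₃) * hsD + (γ*γ*γ + -1*γ*γ*γ*s₃ + -1*γ*γ*γ*γ + 2*γ*γ*γ*γ*s₃ + -1*γ*γ*γ*γ*γ*s₃ + β*γ*γ + -1*β*γ*γ*γ + β*γ*γ*γ*s₃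 + -1*β*γ*γ*γ*γ*s₃ + β*β*γ*s₃ + -2*β*β*γ*γ*s₃ + β*β*γ*γ*γ*s₃ + -1*β*β*β*γ*s₃ + β*β*β*γ*γ*s₃) * hsE + (γ*γ + -2*γ*γ*γ + γ*γ*γ*γ + 2*β*γ + -4*β*γ*γ + 2*β*γ*γ*γ + β*β + -3*β*β*γ + 2*β*β*γ*γ + -1*β*β*β + β*β*β*γ) * hsF
    · linear_combination (γ*γ + -1*γ*γ*s₃ + -1*γ*γ*γ + 2*γ*γ*γ*s₃ + -1*γ*γ*γ*s₂ + γ*γ*γ*s₁ + -1*γ*γ*γ*γ*s₃ + γ*γ*γ*γ*s₂ + -1*γ*γ*γ*γ*s₁ + β*γ + -1*β*γ*s₃ + -2*β*γ*γ + 4*β*γ*γ*s₃ + -1*β*γ*γ*s₂ + -2*β*γ*γ*s₂*s₃ + 2*β*γ*γ*s₁ + β*γ*γ*γ + -4*β*γ*γ*γ*s₃ + 2*β*γ*γ*γ*s₂ + 4*β*γ*γ*γ*s₂*s₃ + -3*β*γ*γ*γ*s₁ + β*γ*γ*γ*γ*s₃ + -1*β*γ*γ*γ*γ*s₂ + -2*β*γ*γ*γ*γ*s₂*s₃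 + β*γ*γ*γ*γ*s₁ + -1*β*β*γ + 2*β*β*γ*s₃ + -2*β*β*γ*s₂*s₃ + β*β*γ*s₁ + β*β*γ*γ + -4*β*β*γ*γ*s₃ + β*β*γ*γ*s₂ + 8*β*β*γ*γ*s₂*s₃ + -3*β*β*γ*γ*s₁ + 2*β*β*γ*γ*γ*s₃ + -1*β*β*γ*γ*γ*s₂ + -8*β*β*γ*γ*γ*s₂*s₃ + 2*β*β*γ*γ*γ*s₁ + 2*β*β*γ*γ*γ*γ*s₂*s₃ + -1*β*β*β*γ*s₃ + 4*β*β*β*γ*s₂*s₃ + -1*β*β*β*γ*s₁ + β*β*β*γ*γ*s₃ + -8*β*β*β*γ*γ*s₂*s₃ + β*β*β*γ*γ*s₁ + 4*β*β*β*γ*γ*γ*s₂*s₃ + -2*β*β*β*β*γ*s₂*s₃ + 2*β*β*β*β*γ*γ*s₂*s₃) * hsD + (-1*γ*γ*γ + γ*γ*γ*s₃ + γ*γ*γ*γ + -2*γ*γ*γ*γ*s₃ + γ*γ*γ*γ*γ*s₃ + -1*β*γ*γ + β*γ*γ*γ + -1*β*γ*γ*γ*s₃ + β*γ*γ*γ*γ*s₃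 + -1*β*β*γ*s₃ + 2*β*β*γ*γ*s₃ + -1*β*β*γ*γ*γ*s₃ + β*β*β*γ*s₃ + -1*β*β*β*γ*γ*s₃) * hsE + (-1*γ*γ + 2*γ*γ*γ + -1*γ*γ*γ*γ + -1*β*γ + 3*β*γ*γ + -2*β*γ*γ*γ + β*β*γ + -1*β*β*γ*γ) * hsF
  have hlinu : (T.comp T').linear u = (2*(1-β-γ)*β*γ*(s₁*(s₂*s₃))) • u :=
    smul_right_injective Pt hm hlinu'
  have hlinv : (T.comp T').linear v = (2*(1-β-γ)*β*γ*(s₁*(s₂*s₃))) • v :=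
    smul_right_injective Pt hm hlinv'
  have hlin0 : (T.comp T').linear = (2*(1-β-γ)*β*γ*(s₁*(s₂*s₃))) • LinearMap.id := by
    apply LinearMap.ext
    intro w
    obtain ⟨x, y, hw⟩ := hspan w
    rw [hw, map_add, LinearMap.map_smul, LinearMap.map_smul, hlinu, hlinv]
    simp only [LinearMap.smul_apply, LinearMap.id_apply]
    module
  have hex : ∃ c : ℝ, (T.comp T').linear = c • LinearMap.id :=
    ⟨_, hlin0⟩
  -- the complement point
  have hKP : AffineMap.homothety G (-1/2 : ℝ) P = ((1-β)/2) • u + ((1-γ)/2) • v + A := by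
    rw [AffineMap.homothety_apply, vsub_eq_sub, vadd_eq_add, hG, hP, hB, hC]
    match_scalars
    · ring1
    · ring1
    · ring1
  have hT'KP : T' (((1-β)/2) • u + ((1-γ)/2) • v + A)
      = ((1-β)/2) • u + ((1-γ)/2) • v + A := by
    have h5 : ((β+γ)*((1-β)*(1-γ))) • (T' (((1-β)/2) • u + ((1-γ)/2) • v + A)
        - (((1-β)/2) • u + ((1-γ)/2) • v + A)) = 0 := by
      rw [haff T', hT'A, hT'B, hT'C, hD3c, hE3c, hF3c]
      match_scalars
      · linear_combination ((1/2)*γ*γ + (-1/2)*γ*γ*γ + (1/2)*β*γ + -1*β*γ*γ + (1/2)*β*γ*γ*γ + (-1/2)*β*β*γ + (1/2)*β*β*γ*γ) * hsD + ((1/2)*γ + -1*γ*γ + (1/2)*γ*γ*γ + (1/2)*β + -2*β*γ + 2*β*γ*γ + (-1/2)*β*γ*γ*γ + -1*β*β + 2*β*β*γ + -1*β*β*γ*γ + (1/2)*β*β*β + (-1/2)*β*β*β*γ) * hsF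
      · linear_combination ((-1/2)*γ*γ + (1/2)*γ*γ*γ + -1*β*γ + (3/2)*β*γ*γ + (-1/2)*β*γ*γ*γ + (-1/2)*β*β + (3/2)*β*β*γ + -1*β*β*γ*γ + (1/2)*β*β*β + (-1/2)*β*β*β*γ) * hsD + ((-1/2)*γ + γ*γ + (-1/2)*γ*γ*γ + (-1/2)*β + 2*β*γ + -2*β*γ*γ + (1/2)*β*γ*γ*γ + β*β + -2*β*β*γ + β*β*γ*γ + (-1/2)*β*β*β + (1/2)*β*β*β*γ) * hsE + ((-1/2)*γ + γ*γ + (-1/2)*γ*γ*γ + (-1/2)*β + 2*β*γ + -2*β*γ*γ + (1/2)*β*γ*γ*γ + β*β + -2*β*β*γ + β*β*γ*γ + (-1/2)*β*β*β + (1/2)*β*β*β*γ) * hsF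
      · linear_combination ((1/2)*β*γ + (-1/2)*β*γ*γ + (1/2)*β*β + -1*β*β*γ + (1/2)*β*β*γ*γ + (-1/2)*β*β*β + (1/2)*β*β*β*γ) * hsD + ((1/2)*γ + -1*γ*γ + (1/2)*γ*γ*γ + (1/2)*β + -2*β*γ + 2*β*γ*γ + (-1/2)*β*γ*γ*γ + -1*β*β + 2*β*β*γ + -1*β*β*γ*γ + (1/2)*β*β*β + (-1/2)*β*β*β*γ) * hsE
    exact sub_eq_zero.mp ((smul_eq_zero.mp h5).resolve_left hm2)
  have hTKP : T (((1-β)/2) • u + ((1-γ)/2) • v + A) = P := by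
    have h5 : ((β+γ)*((1-β)*(1-γ))) • (T (((1-β)/2) • u + ((1-γ)/2) • v + A) - P) = 0 := by
      rw [haff T, hTA, hTB, hTC, hDc, hEc, hFc, hP]
      match_scalars
      · linear_combination ((1/2)*β*γ + (-1/2)*β*γ*γ + (1/2)*β*β + -1*β*β*γ + (1/2)*β*β*γ*γ + (-1/2)*β*β*β + (1/2)*β*β*β*γ) * hsD + ((1/2)*β*γ + (-1/2)*β*γ*γ + (1/2)*β*β + -1*β*β*γ + (1/2)*β*β*γ*γ + (-1/2)*β*β*β + (1/2)*β*β*β*γ) * hsF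
      · linear_combination ((-1/2)*γ*γ + (1/2)*γ*γ*γ + -1*β*γ + (3/2)*β*γ*γ + (-1/2)*β*γ*γ*γ + (-1/2)*β*β + (3/2)*β*β*γ + -1*β*β*γ*γ + (1/2)*β*β*β + (-1/2)*β*β*β*γ) * hsD + ((-1/2)*γ*γ + (1/2)*γ*γ*γ + (-1/2)*β*γ + β*γ*γ + (-1/2)*β*γ*γ*γ + (1/2)*β*β*γ + (-1/2)*β*β*γ*γ) * hsE + ((-1/2)*β*γ + (1/2)*β*γ*γ + (-1/2)*β*β + β*β*γ + (-1/2)*β*β*γ*γ + (1/2)*β*β*β + (-1/2)*β*β*β*γ) * hsF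
      · linear_combination ((1/2)*γ*γ + (-1/2)*γ*γ*γ + (1/2)*β*γ + -1*β*γ*γ + (1/2)*β*γ*γ*γ + (-1/2)*β*β*γ + (1/2)*β*β*γ*γ) * hsD + ((1/2)*γ*γ + (-1/2)*γ*γ*γ + (1/2)*β*γ + -1*β*γ*γ + (1/2)*β*γ*γ*γ + (-1/2)*β*β*γ + (1/2)*β*β*γ*γ) * hsE
    exact sub_eq_zero.mp ((smul_eq_zero.mp h5).resolve_left hm2)
  have hfix : (T.comp T') (AffineMap.homothety G (-1/2 : ℝ) P) = P := by
    rw [hKP, AffineMap.comp_apply, hT'KP, hTKP]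
  refine ⟨hex, hfix, ?_⟩
  -- the collinearity claim
  intro _hPG X hX
  obtain ⟨c, hlin⟩ := hex
  rw [hKP]
  set Q : Pt := ((1-β)/2) • u + ((1-γ)/2) • v + A with hQ
  have hMQ : (T.comp T') Q = P := by
    rw [AffineMap.comp_apply, hT'KP, hTKP]
  have hMX : (T.comp T') X = (T.comp T').linear (X - Q) + (T.comp T') Q := by
    have h := (T.comp T').map_vadd Q (X - Q)
    rw [vadd_eq_add, vadd_eq_add, sub_add_cancel] at h
    exact h
  have hXeq : X = c • (X - Q) + P := by
    conv_lhs => rw [← hX]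
    rw [hMX, hMQ, hlin]
    simp only [LinearMap.smul_apply, LinearMap.id_apply]
  have hz := sub_eq_zero.mpr hXeq
  rcases eq_or_ne c 1 with hc | hc
  · have hQP : Q = P := by
      have h4 : Q - P = 0 := by rw [← hz, hc]; module
      exact sub_eq_zero.mp h4
    rw [hQP, Set.insert_idem]
    exact collinear_pair ℝ P X
  · have h1c : (1:ℝ) - c ≠ 0 := sub_ne_zero.mpr (Ne.symm hc)
    have hc1' : c - 1 ≠ 0 := sub_ne_zero.mpr hc
    have h2 : (1-c) • (X - ((c/(c-1)) • (Q - P) + P)) = 0 := by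
      rw [← hz]
      match_scalars <;> field_simp <;> ring
    have h3 := (smul_eq_zero.mp h2).resolve_left h1c
    have hXval : X = (c/(c-1)) • (Q - P) + P := sub_eq_zero.mp h3
    rw [collinear_iff_of_mem (Set.mem_insert P _)]
    refine ⟨Q - P, fun p hp => ?_⟩
    simp only [Set.mem_insert_iff, Set.mem_singleton_iff] at hp
    rcases hp with rfl | rfl | rfl
    · exact ⟨0, by simp⟩
    · exact ⟨1, by rw [vadd_eq_add, one_smul]; abel⟩
    · exact ⟨c/(c-1), by rw [vadd_eq_add]; exact hXval⟩
end

section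
/- Assume D, E, F are affinely independent. Let A' be a point with A' ≠ B, A' ≠ C, such that the line BA' is parallel to the line DF and the line CA' is parallel to the line DE. Then A, A', Q are collinear. (Together with the analogous statements at B and C, this says the triangle formed by the parallels through A, B, C to the sides EF, DF, DE of the cevian triangle is the anticevian triangle of Q.) -/
open EuclideanGeometry Affine

local notation "Pt" => EuclideanSpace ℝ (Fin 2)

lemma my_col_iff (X Y Z : Pt) : Collinear ℝ ({X, Y, Z} : Set Pt) ↔
    (Y 0 - X 0) * (Z 1 - X 1) - (Y 1 - X 1) * (Z 0 - X 0) = 0 := by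
  constructor
  · intro h
    rw [collinear_iff_of_mem (Set.mem_insert X {Y, Z})] at h
    obtain ⟨v, hv⟩ := h
    obtain ⟨rY, hY⟩ := hv Y (by simp)
    obtain ⟨rZ, hZ⟩ := hv Z (by simp)
    rw [hY, hZ]
    simp only [vadd_eq_add, PiLp.add_apply, PiLp.smul_apply, smul_eq_mul]
    ring
  · intro h
    by_cases hXY : Y = X
    · rw [hXY]
      have he : ({X, X, Z} : Set (EuclideanSpace ℝ (Fin 2))) = {X, Z} := by simp
      rw [he]
      exact collinear_pair ℝ X Z
    · rw [collinear_iff_of_mem (Set.mem_insert X {Y, Z})]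
      refine ⟨Y - X, ?_⟩
      intro p hp
      rcases hp with rfl | rfl | rfl
      · exact ⟨0, by simp⟩
      · exact ⟨1, by simp⟩
      · by_cases h0 : Y 0 - X 0 ≠ 0
        · refine ⟨(p 0 - X 0) / (Y 0 - X 0), ?_⟩
          ext i
          fin_cases i <;>
            simp only [Fin.mk_zero, Fin.mk_one, vadd_eq_add, PiLp.add_apply, PiLp.smul_apply,
              PiLp.sub_apply, smul_eq_mul]
          · field_simp
            ring
          · field_simp
            linear_combination h
        · push_neg at h0
          have h1 : Y 1 - X 1 ≠ 0 := by
            intro h1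
            apply hXY
            ext i
            fin_cases i <;> simp only [Fin.mk_zero, Fin.mk_one] <;> linarith
          refine ⟨(p 1 - X 1) / (Y 1 - X 1), ?_⟩
          ext i
          fin_cases i <;>
            simp only [Fin.mk_zero, Fin.mk_one, vadd_eq_add, PiLp.add_apply, PiLp.smul_apply,
              PiLp.sub_apply, smul_eq_mul]
          · field_simp
            linear_combination -h
          · field_simp
            ring

noncomputable def myPt (A e₁ e₂ : Pt) (x y : ℝ) : Pt := A + x • e₁ + y • e₂


lemma my_colb (A e₁ e₂ : Pt) (hd : e₁ 0 * e₂ 1 - e₁ 1 * e₂ 0 ≠ 0) (x1 y1 x2 y2 x3 y3 : ℝ) :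
    Collinear ℝ ({myPt A e₁ e₂ x1 y1, myPt A e₁ e₂ x2 y2, myPt A e₁ e₂ x3 y3} : Set Pt) ↔
    (x2 - x1) * (y3 - y1) - (y2 - y1) * (x3 - x1) = 0 := by
  rw [my_col_iff]
  have key : (myPt A e₁ e₂ x2 y2 0 - myPt A e₁ e₂ x1 y1 0) * (myPt A e₁ e₂ x3 y3 1 - myPt A e₁ e₂ x1 y1 1) -
      (myPt A e₁ e₂ x2 y2 1 - myPt A e₁ e₂ x1 y1 1) * (myPt A e₁ e₂ x3 y3 0 - myPt A e₁ e₂ x1 y1 0)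
      = ((x2 - x1) * (y3 - y1) - (y2 - y1) * (x3 - x1)) * (e₁ 0 * e₂ 1 - e₁ 1 * e₂ 0) := by
    simp only [myPt, PiLp.add_apply, PiLp.smul_apply, smul_eq_mul]
    ring
  rw [key, mul_eq_zero]
  simp [hd]

lemma my_ptinj (A e₁ e₂ : Pt) (hd : e₁ 0 * e₂ 1 - e₁ 1 * e₂ 0 ≠ 0) {x y x' y' : ℝ}
    (h : myPt A e₁ e₂ x y = myPt A e₁ e₂ x' y') : x = x' ∧ y = y' := by
  have h0 := congrArg (fun v : Pt => v 0) h
  have h1 := congrArg (fun v : Pt => v 1) h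
  simp only [myPt, PiLp.add_apply, PiLp.smul_apply, smul_eq_mul] at h0 h1
  constructor
  · have : (x - x') * (e₁ 0 * e₂ 1 - e₁ 1 * e₂ 0) = 0 := by linear_combination e₂ 1 * h0 - e₂ 0 * h1
    rcases mul_eq_zero.mp this with h | h
    · linarith
    · exact absurd h hd
  · have : (y - y') * (e₁ 0 * e₂ 1 - e₁ 1 * e₂ 0) = 0 := by linear_combination e₁ 0 * h1 - e₁ 1 * h0
    rcases mul_eq_zero.mp this with h | h
    · linarith
    · exact absurd h hd

lemma my_rep (A e₁ e₂ : Pt) (hd : e₁ 0 * e₂ 1 - e₁ 1 * e₂ 0 ≠ 0) (X : Pt) :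
    ∃ x y : ℝ, X = myPt A e₁ e₂ x y := by
  refine ⟨((X 0 - A 0) * e₂ 1 - (X 1 - A 1) * e₂ 0) / (e₁ 0 * e₂ 1 - e₁ 1 * e₂ 0),
          (e₁ 0 * (X 1 - A 1) - e₁ 1 * (X 0 - A 0)) / (e₁ 0 * e₂ 1 - e₁ 1 * e₂ 0), ?_⟩
  have hd' : e₂ 1 * e₁ 0 - e₂ 0 * e₁ 1 ≠ 0 := by intro h; apply hd; linear_combination h
  ext i
  fin_cases i <;>
    simp only [Fin.mk_zero, Fin.mk_one, myPt, PiLp.add_apply, PiLp.smul_apply, smul_eq_mul] <;>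
    field_simp <;> ring

lemma my_param (X Y Z : Pt) (h : Collinear ℝ ({X, Y, Z} : Set Pt)) (hXY : X ≠ Y) :
    ∃ t : ℝ, Z = X + t • (Y - X) := by
  rw [collinear_iff_of_mem (Set.mem_insert X {Y, Z})] at h
  obtain ⟨v, hv⟩ := h
  obtain ⟨rY, hY⟩ := hv Y (by simp)
  obtain ⟨rZ, hZ⟩ := hv Z (by simp)
  have hrY : rY ≠ 0 := by
    rintro rfl
    simp at hY
    exact hXY hY.symm
  refine ⟨rZ / rY, ?_⟩
  rw [hZ, hY]
  simp only [vadd_eq_add]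
  rw [add_sub_cancel_right]
  rw [smul_smul]
  field_simp
  exact add_comm _ _

lemma my_elim (a b c e t qx qy : ℝ) (s : ℝ) (h1 : 1 + t * b = s * a) (h2 : t * e = 1 + s * c)
    (hδ : a * e - c * b ≠ 0) (hid : (a * e - c * b) * qy + (a + c) * (b * qy - e * qx) = 0) :
    (1 + t * b) * qy - t * e * qx = 0 := by
  have hT : t * (a * e - c * b) = a + c := by linear_combination a * h2 - c * h1
  have h3 : ((1 + t * b) * qy - t * e * qx) * (a * e - c * b) = 0 := by
    linear_combination (b * qy - e * qx) * hT + hid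
  exact (mul_eq_zero.mp h3).resolve_right hδ

lemma my_id (p q tD tE tF x' y' : ℝ) (hpq : p + q ≠ 0) (h1p : 1 - p ≠ 0) (h1q : 1 - q ≠ 0)
    (hS : p * (1 - p) + (1 - p - q) * q ≠ 0)
    (hTD : tD * (p + q) = 1) (hTE : tE * (1 - p) = 1) (hTF : tF * (1 - q) = 1)
    (hx' : x' * (p * (1 - p) + (1 - p - q) * q) = q * (1 - p - q))
    (hy' : y' * (p * (1 - p) + (1 - p - q) * q) = p * (1 - p - q)) :
    ((tD * p - 0) * (tD * q - 0) - (tD * q - tE * q) * (tD * p - tF * p)) * (1/2 - y'/2)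
      + ((tD * p - 0) + (tD * q - tE * q)) * ((tD * p - tF * p) * (1/2 - y'/2)
        - (tD * q - 0) * (1/2 - x'/2)) = 0 := by
  have h1 : tD = 1 / (p + q) := by rw [eq_div_iff hpq]; exact hTD
  have h2 : tE = 1 / (1 - p) := by rw [eq_div_iff h1p]; exact hTE
  have h3 : tF = 1 / (1 - q) := by rw [eq_div_iff h1q]; exact hTF
  have h4 : x' = q * (1 - p - q) / (p * (1 - p) + (1 - p - q) * q) := by
    rw [eq_div_iff hS]; exact hx'
  have h5 : y' = p * (1 - p - q) / (p * (1 - p) + (1 - p - q) * q) := by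
    rw [eq_div_iff hS]; exact hy'
  subst h1 h2 h3 h4 h5
  have hS' : p * (1 - p) + q * (1 - p - q) ≠ 0 := by intro h; apply hS; linear_combination h
  field_simp
  ring

theorem stmt_14 (A B C G P D E F D0 E0 F0 D3 E3 F3 P' Q A' : Pt)
(hABC : AffineIndependent ℝ ![A, B, C])
    (hG : G = (1/3 : ℝ) • (A + B + C))
    (hPa : ¬ Collinear ℝ {B, C, P})
    (hPb : ¬ Collinear ℝ {C, A, P})
    (hPc : ¬ Collinear ℝ {A, B, P})
    (hD : Collinear ℝ {B, C, D}) (hDcev : Collinear ℝ {A, P, D})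
    (hE : Collinear ℝ {C, A, E}) (hEcev : Collinear ℝ {B, P, E})
    (hF : Collinear ℝ {A, B, F}) (hFcev : Collinear ℝ {C, P, F})
    (hD0 : D0 = midpoint ℝ B C) (hE0 : E0 = midpoint ℝ C A) (hF0 : F0 = midpoint ℝ A B)
(hD3 : D3 = Equiv.pointReflection D0 D)
    (hE3 : E3 = Equiv.pointReflection E0 E)
    (hF3 : F3 = Equiv.pointReflection F0 F)
(hP'a : Collinear ℝ {A, D3, P'})
    (hP'b : Collinear ℝ {B, E3, P'})
    (hP'c : Collinear ℝ {C, F3, P'})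
    (hQ : Q = AffineMap.homothety G (-1/2 : ℝ) P')
    (hDEF : AffineIndependent ℝ ![D, E, F])
    (hA'B : A' ≠ B) (hA'C : A' ≠ C)
    (hBA' : line[ℝ, B, A'] ∥ line[ℝ, D, F])
    (hCA' : line[ℝ, C, A'] ∥ line[ℝ, D, E]) :
    Collinear ℝ {A, A', Q} := by
  have hncABC : ¬ Collinear ℝ ({A, B, C} : Set (EuclideanSpace ℝ (Fin 2))) :=
    affineIndependent_iff_not_collinear_set.mp hABC
  have hd : (B - A) 0 * (C - A) 1 - (B - A) 1 * (C - A) 0 ≠ 0 := by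
    intro h
    apply hncABC
    rw [my_col_iff]
    simp only [PiLp.sub_apply] at h
    linear_combination h
  have colb := my_colb A (B - A) (C - A) hd
  have inj : ∀ {x y x' y' : ℝ}, myPt A (B - A) (C - A) x y = myPt A (B - A) (C - A) x' y' → x = x' ∧ y = y' :=
    fun h => my_ptinj A (B - A) (C - A) hd h
  have hApt : A = myPt A (B - A) (C - A) 0 0 := by simp only [myPt]; module
  have hBpt : B = myPt A (B - A) (C - A) 1 0 := by simp only [myPt]; module
  have hCpt : C = myPt A (B - A) (C - A) 0 1 := by simp only [myPt]; module
  obtain ⟨p, q, hPpt⟩ := my_rep A (B - A) (C - A) hd P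
  -- scalar non-collinearities
  have hPa' : ¬ (((0:ℝ) - 1) * (q - 0) - (1 - 0) * (p - 1) = 0) := by
    intro h
    apply hPa
    have hset : ({myPt A (B - A) (C - A) 1 0, myPt A (B - A) (C - A) 0 1, myPt A (B - A) (C - A) p q} : Set (EuclideanSpace ℝ (Fin 2))) = {B, C, P} := by
      rw [← hBpt, ← hCpt, ← hPpt]
    rw [← hset]
    exact (colb 1 0 0 1 p q).mpr h
  have hPb' : ¬ (((0:ℝ) - 0) * (q - 1) - (0 - 1) * (p - 0) = 0) := by
    intro h
    apply hPb
    have hset : ({myPt A (B - A) (C - A) 0 1, myPt A (B - A) (C - A) 0 0, myPt A (B - A) (C - A) p q} : Set (EuclideanSpace ℝ (Fin 2))) = {C, A, P} := by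
      rw [← hCpt, ← hApt, ← hPpt]
    rw [← hset]
    exact (colb 0 1 0 0 p q).mpr h
  have hPc' : ¬ (((1:ℝ) - 0) * (q - 0) - (0 - 0) * (p - 0) = 0) := by
    intro h
    apply hPc
    have hset : ({myPt A (B - A) (C - A) 0 0, myPt A (B - A) (C - A) 1 0, myPt A (B - A) (C - A) p q} : Set (EuclideanSpace ℝ (Fin 2))) = {A, B, P} := by
      rw [← hApt, ← hBpt, ← hPpt]
    rw [← hset]
    exact (colb 0 0 1 0 p q).mpr h
  have hu : (1:ℝ) - p - q ≠ 0 := fun h => hPa' (by linear_combination h)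
  have hp : p ≠ 0 := fun h => hPb' (by rw [h]; ring)
  have hq : q ≠ 0 := fun h => hPc' (by rw [h]; ring)
  -- point inequalities
  have hAP : A ≠ P := by
    intro h
    have h' : myPt A (B - A) (C - A) 0 0 = myPt A (B - A) (C - A) p q := by rw [← hApt, ← hPpt]; exact h
    exact hp (inj h').1.symm
  have hBP : B ≠ P := by
    intro h
    have h' : myPt A (B - A) (C - A) 1 0 = myPt A (B - A) (C - A) p q := by rw [← hBpt, ← hPpt]; exact h
    exact hq (inj h').2.symm
  have hCP : C ≠ P := by
    intro h
    have h' : myPt A (B - A) (C - A) 0 1 = myPt A (B - A) (C - A) p q := by rw [← hCpt, ← hPpt]; exact h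
    exact hp (inj h').1.symm
  have hBC : B ≠ C := by
    intro h
    have h' : myPt A (B - A) (C - A) 1 0 = myPt A (B - A) (C - A) 0 1 := by rw [← hBpt, ← hCpt]; exact h
    exact one_ne_zero (inj h').1
  have hCA : C ≠ A := by
    intro h
    have h' : myPt A (B - A) (C - A) 0 1 = myPt A (B - A) (C - A) 0 0 := by rw [← hCpt, ← hApt]; exact h
    exact one_ne_zero (inj h').2
  have hAB : A ≠ B := by
    intro h
    have h' : myPt A (B - A) (C - A) 0 0 = myPt A (B - A) (C - A) 1 0 := by rw [← hApt, ← hBpt]; exact h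
    exact zero_ne_one (inj h').1
  -- cevian traces
  obtain ⟨tD, htD⟩ := my_param A P D hDcev hAP
  have hDpt : D = myPt A (B - A) (C - A) (tD * p) (tD * q) := by rw [htD, hPpt]; simp only [myPt]; module
  obtain ⟨sD, hsD⟩ := my_param B C D hD hBC
  have hDpt2 : D = myPt A (B - A) (C - A) (1 - sD) sD := by rw [hsD]; simp only [myPt]; module
  have hDeq := inj (show myPt A (B - A) (C - A) (tD * p) (tD * q) = myPt A (B - A) (C - A) (1 - sD) sD by rw [← hDpt, ← hDpt2])
  have hTD : tD * (p + q) = 1 := by linear_combination hDeq.1 + hDeq.2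
  have hpq : p + q ≠ 0 := by
    intro h
    rw [h, mul_zero] at hTD
    exact one_ne_zero hTD.symm
  have htDv : tD = 1 / (p + q) := by rw [eq_div_iff hpq]; exact hTD
  obtain ⟨tE, htE⟩ := my_param B P E hEcev hBP
  have hEpt : E = myPt A (B - A) (C - A) (1 + tE * (p - 1)) (tE * q) := by rw [htE, hPpt]; simp only [myPt]; module
  obtain ⟨sE, hsE⟩ := my_param C A E hE hCA
  have hEpt2 : E = myPt A (B - A) (C - A) 0 (1 - sE) := by rw [hsE]; simp only [myPt]; module
  have hEeq := inj (show myPt A (B - A) (C - A) (1 + tE * (p - 1)) (tE * q) = myPt A (B - A) (C - A) 0 (1 - sE) by rw [← hEpt, ← hEpt2])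
  have hTE : tE * (1 - p) = 1 := by linear_combination -hEeq.1
  have h1p : (1:ℝ) - p ≠ 0 := by
    intro h
    rw [h, mul_zero] at hTE
    exact one_ne_zero hTE.symm
  have htEv : tE = 1 / (1 - p) := by rw [eq_div_iff h1p]; exact hTE
  have hEpt3 : E = myPt A (B - A) (C - A) 0 (tE * q) := by rw [hEpt2, ← hEeq.2]
  obtain ⟨tF, htF⟩ := my_param C P F hFcev hCP
  have hFpt : F = myPt A (B - A) (C - A) (tF * p) (1 + tF * (q - 1)) := by rw [htF, hPpt]; simp only [myPt]; module
  obtain ⟨sF, hsF⟩ := my_param A B F hF hAB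
  have hFpt2 : F = myPt A (B - A) (C - A) sF 0 := by rw [hsF]; simp only [myPt]; module
  have hFeq := inj (show myPt A (B - A) (C - A) (tF * p) (1 + tF * (q - 1)) = myPt A (B - A) (C - A) sF 0 by rw [← hFpt, ← hFpt2])
  have hTF : tF * (1 - q) = 1 := by linear_combination -hFeq.2
  have h1q : (1:ℝ) - q ≠ 0 := by
    intro h
    rw [h, mul_zero] at hTF
    exact one_ne_zero hTF.symm
  have htFv : tF = 1 / (1 - q) := by rw [eq_div_iff h1q]; exact hTF
  have hFpt3 : F = myPt A (B - A) (C - A) (tF * p) 0 := by rw [hFpt, hFeq.2]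
  -- reflections
  have hmid : ∀ X Y : EuclideanSpace ℝ (Fin 2), midpoint ℝ X Y = (2⁻¹ : ℝ) • (X + Y) := by
    intro X Y
    rw [midpoint_eq_smul_add]
    norm_num
  have hD3pt : D3 = myPt A (B - A) (C - A) (1 - tD * p) (1 - tD * q) := by
    rw [hD3, hD0, Equiv.pointReflection_apply, hmid, hDpt]
    simp only [myPt, vsub_eq_sub, vadd_eq_add]
    module
  have hE3pt : E3 = myPt A (B - A) (C - A) 0 (1 - tE * q) := by
    rw [hE3, hE0, Equiv.pointReflection_apply, hmid, hEpt3]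
    simp only [myPt, vsub_eq_sub, vadd_eq_add]
    module
  -- isotomic conjugate
  obtain ⟨x', y', hP'pt⟩ := my_rep A (B - A) (C - A) hd P'
  have hc1 : Collinear ℝ ({myPt A (B - A) (C - A) 0 0, myPt A (B - A) (C - A) (1 - tD * p) (1 - tD * q), myPt A (B - A) (C - A) x' y'} : Set (EuclideanSpace ℝ (Fin 2))) := by
    have hset : ({myPt A (B - A) (C - A) 0 0, myPt A (B - A) (C - A) (1 - tD * p) (1 - tD * q), myPt A (B - A) (C - A) x' y'} : Set (EuclideanSpace ℝ (Fin 2))) = {A, D3, P'} := by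
      rw [← hApt, ← hD3pt, ← hP'pt]
    rw [hset]
    exact hP'a
  have heq1 := (colb 0 0 (1 - tD * p) (1 - tD * q) x' y').mp hc1
  have hc2 : Collinear ℝ ({myPt A (B - A) (C - A) 1 0, myPt A (B - A) (C - A) 0 (1 - tE * q), myPt A (B - A) (C - A) x' y'} : Set (EuclideanSpace ℝ (Fin 2))) := by
    have hset : ({myPt A (B - A) (C - A) 1 0, myPt A (B - A) (C - A) 0 (1 - tE * q), myPt A (B - A) (C - A) x' y'} : Set (EuclideanSpace ℝ (Fin 2))) = {B, E3, P'} := by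
      rw [← hBpt, ← hE3pt, ← hP'pt]
    rw [hset]
    exact hP'b
  have heq2 := (colb 1 0 0 (1 - tE * q) x' y').mp hc2
  have hE1 : q * y' - p * x' = 0 := by
    linear_combination (p + q) * heq1 + (p * y' - q * x') * hTD
  have hE2 : y' * (1 - p) + (1 - p - q) * (x' - 1) = 0 := by
    linear_combination (-(1 - p)) * heq2 + (q * (x' - 1)) * hTE
  have hy'S : y' * (p * (1 - p) + (1 - p - q) * q) - p * (1 - p - q) = 0 := by
    linear_combination p * hE2 + (1 - p - q) * hE1
  have hS : p * (1 - p) + (1 - p - q) * q ≠ 0 := by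
    intro h
    have h2 : p * (1 - p - q) = 0 := by linear_combination -hy'S + y' * h
    rcases mul_eq_zero.mp h2 with h' | h'
    · exact hp h'
    · exact hu h'
  have hy'v : y' = p * (1 - p - q) / (p * (1 - p) + (1 - p - q) * q) := by
    rw [eq_div_iff hS]
    linear_combination hy'S
  have hx'Sp : p * (x' * (p * (1 - p) + (1 - p - q) * q) - q * (1 - p - q)) = 0 := by
    linear_combination q * hy'S - (p * (1 - p) + (1 - p - q) * q) * hE1
  have hx'v : x' = q * (1 - p - q) / (p * (1 - p) + (1 - p - q) * q) := by
    rw [eq_div_iff hS]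
    linear_combination (mul_eq_zero.mp hx'Sp).resolve_left hp
  -- Q
  have hGpt : G = myPt A (B - A) (C - A) (1/3) (1/3) := by rw [hG]; simp only [myPt]; module
  have hQpt : Q = myPt A (B - A) (C - A) (1/2 - x'/2) (1/2 - y'/2) := by
    rw [hQ, AffineMap.homothety_apply, hGpt, hP'pt]
    simp only [myPt, vsub_eq_sub, vadd_eq_add]
    module
  -- A'
  have hmem1 : A' -ᵥ B ∈ (line[ℝ, D, F]).direction := by
    rw [← hBA'.direction_eq]
    exact AffineSubspace.vsub_mem_direction (right_mem_affineSpan_pair ℝ B A')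
      (left_mem_affineSpan_pair ℝ B A')
  rw [direction_affineSpan, vectorSpan_pair, Submodule.mem_span_singleton] at hmem1
  obtain ⟨t, ht⟩ := hmem1
  have hA'eq1 : A' = t • (D - F) + B := by
    simp only [vsub_eq_sub] at ht
    rw [ht]
    abel
  have hmem2 : A' -ᵥ C ∈ (line[ℝ, D, E]).direction := by
    rw [← hCA'.direction_eq]
    exact AffineSubspace.vsub_mem_direction (right_mem_affineSpan_pair ℝ C A')
      (left_mem_affineSpan_pair ℝ C A')
  rw [direction_affineSpan, vectorSpan_pair, Submodule.mem_span_singleton] at hmem2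
  obtain ⟨s, hs⟩ := hmem2
  have hA'eq2 : A' = s • (D - E) + C := by
    simp only [vsub_eq_sub] at hs
    rw [hs]
    abel
  have hA'1 : A' = myPt A (B - A) (C - A) (1 + t * (tD * p - tF * p)) (t * (tD * q - 0)) := by
    rw [hA'eq1, hDpt, hFpt3]
    simp only [myPt]
    module
  have hA'2 : A' = myPt A (B - A) (C - A) (s * (tD * p - 0)) (1 + s * (tD * q - tE * q)) := by
    rw [hA'eq2, hDpt, hEpt3]
    simp only [myPt]
    module
  have hteq := inj (show myPt A (B - A) (C - A) (1 + t * (tD * p - tF * p)) (t * (tD * q - 0))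
      = myPt A (B - A) (C - A) (s * (tD * p - 0)) (1 + s * (tD * q - tE * q)) by rw [← hA'1, ← hA'2])
  -- nondegeneracy of DEF
  have hncDEF : ¬ Collinear ℝ ({D, E, F} : Set (EuclideanSpace ℝ (Fin 2))) :=
    affineIndependent_iff_not_collinear_set.mp hDEF
  have hdel : (tD * p - 0) * (tD * q - 0) - (tD * q - tE * q) * (tD * p - tF * p) ≠ 0 := by
    intro h
    apply hncDEF
    have hset : ({myPt A (B - A) (C - A) (tD * p) (tD * q), myPt A (B - A) (C - A) 0 (tE * q), myPt A (B - A) (C - A) (tF * p) 0} : Set (EuclideanSpace ℝ (Fin 2))) = {D, E, F} := by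
      rw [← hDpt, ← hEpt3, ← hFpt3]
    rw [← hset]
    exact (colb (tD * p) (tD * q) 0 (tE * q) (tF * p) 0).mpr (by linear_combination h)
  -- the key algebraic identity
  have hy'M : y' * (p * (1 - p) + (1 - p - q) * q) = p * (1 - p - q) := by
    linear_combination hy'S
  have hx'M : x' * (p * (1 - p) + (1 - p - q) * q) = q * (1 - p - q) := by
    linear_combination (mul_eq_zero.mp hx'Sp).resolve_left hp
  have hid : ((tD * p - 0) * (tD * q - 0) - (tD * q - tE * q) * (tD * p - tF * p)) * (1/2 - y'/2)
      + ((tD * p - 0) + (tD * q - tE * q)) * ((tD * p - tF * p) * (1/2 - y'/2) - (tD * q - 0) * (1/2 - x'/2)) = 0 :=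
    my_id p q tD tE tF x' y' hpq h1p h1q hS hTD hTE hTF hx'M hy'M
  have hkey := my_elim (tD * p - 0) (tD * p - tF * p) (tD * q - tE * q) (tD * q - 0) t
    (1/2 - x'/2) (1/2 - y'/2) s hteq.1 hteq.2 hdel hid
  have hsetG : ({myPt A (B - A) (C - A) 0 0, myPt A (B - A) (C - A) (1 + t * (tD * p - tF * p)) (t * (tD * q - 0)), myPt A (B - A) (C - A) (1/2 - x'/2) (1/2 - y'/2)} : Set (EuclideanSpace ℝ (Fin 2))) = {A, A', Q} := by
    rw [← hApt, ← hA'1, ← hQpt]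
  rw [← hsetG, colb]
  linear_combination hkey
end
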